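/- arXiv:2501.00809 — 11 statements merged into one kernel-verified Lean document; each statement's English description precedes it below -/
import Mathlib

section
/- Fix an integer m ≥ 2. The map ψ(a,b,c) = (3(m−1)−a−b, a, 1+b+c) is a bijection from 𝓡 onto 𝓜, with inverse (i,j,k) ↦ (j, 3(m−1)−i−j, i+j+k−(3m−2)), and it satisfies wt_𝓜(ψ(u)) = wt_𝓡(u) for every u ∈ 𝓡. In particular, for every w ∈ ℕ the sets 𝓡_w and 𝓜_w have the same cardinality. -/
open Finset

abbrev V : Type := ℤ × ℤ × ℤ

/-- weight of a monomial `(a,b,c)`, i.e. `a + 2b + 3c` -/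
def wtR (u : V) : ℤ := u.1 + 2 * u.2.1 + 3 * u.2.2

/-- the `𝓜`-weight of `(i,j,k)`, i.e. `i + 2j + 3k - 3m` -/
def wtM (m : ℤ) (v : V) : ℤ := v.1 + 2 * v.2.1 + 3 * v.2.2 - 3 * m

/-- `t_𝓡 (a,b,c) = ⌊c/2⌋` -/
def tR (u : V) : ℤ := u.2.2 / 2

/-- `t_𝓜 (i,j,k) = ⌊(3(m-1)-i-j)/3⌋` -/
def tM (m : ℤ) (v : V) : ℤ := (3 * (m - 1) - v.1 - v.2.1) / 3

/-- the threshold number `τ_w = ⌊w/3⌋ - (m-1)` -/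
def tauW (m w : ℤ) : ℤ := w / 3 - (m - 1)

/-- `δ_w = 6m - 9 - w` -/
def deltaW (m w : ℤ) : ℤ := 6 * m - 9 - w

/-- `ε(n)`: residue of `n` mod 2, in `{0,1}` -/
def epsZ (n : ℤ) : ℤ := n % 2

/-- `η(n)`: residue of `n` mod 3, in `{0,1,2}` -/
def etaZ (n : ℤ) : ℤ := n % 3

/-- `ρ(n)`: the representative of `n` mod 6 lying in `{-6,-4,-3,-2,-1,1}` -/
def rhoZ (n : ℤ) : ℤ := if n % 6 = 1 then 1 else n % 6 - 6

/-- `λ(n) = (n - ρ(n))/6` -/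
def lamZ (n : ℤ) : ℤ := (n - rhoZ n) / 6

/-- `q_h = (0, 3h, m - 2h)` -/
def qvec (m h : ℤ) : V := (0, 3 * h, m - 2 * h)

def e1v : V := (1, 1, -1)

def e2v : V := (0, 3, -2)

/-- `u` has non-negative coordinates (i.e. `u ∈ ℕ³`) -/
def nonnegV (u : V) : Prop := 0 ≤ u.1 ∧ 0 ≤ u.2.1 ∧ 0 ≤ u.2.2

/-- `𝓡 = {(a,b,c) ∈ ℕ³ : a + b ≤ 3(m-1)}` -/
def Rfull (m : ℤ) : Set V := {u | nonnegV u ∧ u.1 + u.2.1 ≤ 3 * (m - 1)}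

/-- `𝓜 = {(i,j,k) ∈ ℕ³ : i + j ≤ 3(m-1), i + j + k ≥ 3m - 2}` -/
def Mfull (m : ℤ) : Set V :=
  {v | nonnegV v ∧ v.1 + v.2.1 ≤ 3 * (m - 1) ∧ 3 * m - 2 ≤ v.1 + v.2.1 + v.2.2}

/-- `𝓡' = {(a,b,c) ∈ ℕ³ : 2a + 2b + 3c ≤ 6m - 9}` -/
def Rprime (m : ℤ) : Set V := {u | nonnegV u ∧ 2 * u.1 + 2 * u.2.1 + 3 * u.2.2 ≤ 6 * m - 9}

/-- `𝓜' = {(i,j,k) ∈ ℕ³ : 2i+2j+3k ≤ 9(m-1), i+j ≤ 3(m-1), i+j+k ≥ 3m-2}` -/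
def Mprime (m : ℤ) : Set V :=
  {v | nonnegV v ∧ 2 * v.1 + 2 * v.2.1 + 3 * v.2.2 ≤ 9 * (m - 1) ∧
    v.1 + v.2.1 ≤ 3 * (m - 1) ∧ 3 * m - 2 ≤ v.1 + v.2.1 + v.2.2}

/-- the rectangular region `𝓡^▭` -/
def Rrect (m : ℤ) : Set V := {u ∈ Rprime m | tR u ≤ tauW m (wtR u)}

/-- the rectangular region `𝓜^▭` -/
def Mrect (m : ℤ) : Set V := {v ∈ Mprime m | tM m v ≤ tauW m (wtM m v)}

/-- the triangular region `𝓡^△ = 𝓡' ∖ 𝓡^▭` -/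
def Rtri (m : ℤ) : Set V := {u ∈ Rprime m | tauW m (wtR u) + 1 ≤ tR u}

/-- the triangular region `𝓜^△ = 𝓜' ∖ 𝓜^▭` -/
def Mtri (m : ℤ) : Set V := {v ∈ Mprime m | tauW m (wtM m v) + 1 ≤ tM m v}

/-- the extended triangular region `𝓡^T` -/
def RText (m : ℤ) : Set V := {u | nonnegV u ∧ tauW m (wtR u) + 1 ≤ tR u}

/-- the extended triangular region `𝓜^T` -/
def MText (m : ℤ) : Set V := {v ∈ Mfull m | tauW m (wtM m v) + 1 ≤ tM m v}

/-- the bijection `φ^▭ (u) = u + q_{λ(u)}` on the rectangular region -/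
def phiRect (m : ℤ) (u : V) : V := u + qvec m (lamZ (deltaW m (wtR u) - u.1))

/-- the parametrization `u^△ (w,r,s)` of the extended triangular region `𝓡^T` -/
def uTri (d : V) : V :=
  (3 * d.2.2 + etaZ (d.1 + d.2.1), d.2.1,
    (d.1 - 2 * d.2.1 - 3 * d.2.2 - etaZ (d.1 + d.2.1)) / 3)

/-- the parametrization `v^△ (w,r,s)` of the extended triangular region `𝓜^T` -/
def vTri (m : ℤ) (d : V) : V :=
  ((6 * (m - 1) - d.1 - 2 * d.2.1 + 3 * d.2.2 - epsZ (d.1 + d.2.2)) / 2,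
    2 * d.2.1 + epsZ (d.1 + d.2.2),
    (d.1 - 2 * d.2.1 - d.2.2 + 2 - epsZ (d.1 + d.2.2)) / 2)

/-- `𝓓 = {(w,r,s) ∈ ℕ³ : 2r + 3s ≤ w}` -/
def Dall : Set V := {d | nonnegV d ∧ 2 * d.2.1 + 3 * d.2.2 ≤ d.1}

/-- `t_𝓓 (w,r,s) = ⌊(w - 2r - 3s)/6⌋` -/
def tD (d : V) : ℤ := (d.1 - 2 * d.2.1 - 3 * d.2.2) / 6

/-- `𝓓^T = {d ∈ 𝓓 : t_𝓓(d) ≥ τ_w + 1}` -/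
def DText (m : ℤ) : Set V := {d ∈ Dall | tauW m d.1 + 1 ≤ tD d}

/-- explicit formula for `φ^△ = v^△ ∘ (u^△)⁻¹`: for `u = (a,b,c) ∈ 𝓡^T` the unique
`(w,r,s) ∈ 𝓓^T` with `u^△(w,r,s) = u` is `(wt(u), b, ⌊a/3⌋)`. -/
def phiTri (m : ℤ) (u : V) : V := vTri m (wtR u, u.2.1, u.1 / 3)

/-- the glued bijection `φ`: `φ^▭` on `𝓡^▭` and `φ^△` on `𝓡^△` -/
def phiW (m : ℤ) (u : V) : V :=
  if tR u ≤ tauW m (wtR u) then phiRect m u else phiTri m u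

noncomputable def boxF (N : ℤ) : Finset V := Finset.Icc 0 N ×ˢ (Finset.Icc 0 N ×ˢ Finset.Icc 0 N)

/-- `𝓡_w` as a finset -/
noncomputable def RfullWF (m w : ℤ) : Finset V :=
  (boxF w).filter fun u => u.1 + u.2.1 ≤ 3 * (m - 1) ∧ wtR u = w

/-- `𝓜_w` as a finset -/
noncomputable def MfullWF (m w : ℤ) : Finset V :=
  (boxF (w + 3 * m)).filter fun v =>
    v.1 + v.2.1 ≤ 3 * (m - 1) ∧ 3 * m - 2 ≤ v.1 + v.2.1 + v.2.2 ∧ wtM m v = w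

/-- `𝓡'_w` as a finset -/
noncomputable def RprimeWF (m w : ℤ) : Finset V :=
  (boxF w).filter fun u => 2 * u.1 + 2 * u.2.1 + 3 * u.2.2 ≤ 6 * m - 9 ∧ wtR u = w

/-- `𝓜'_w` as a finset -/
noncomputable def MprimeWF (m w : ℤ) : Finset V :=
  (boxF (w + 3 * m)).filter fun v =>
    2 * v.1 + 2 * v.2.1 + 3 * v.2.2 ≤ 9 * (m - 1) ∧ v.1 + v.2.1 ≤ 3 * (m - 1) ∧
      3 * m - 2 ≤ v.1 + v.2.1 + v.2.2 ∧ wtM m v = w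

/-- `𝓡^▭_w` as a finset -/
noncomputable def RrectWF (m w : ℤ) : Finset V := (RprimeWF m w).filter fun u => tR u ≤ tauW m w

/-- `𝓜^▭_w` as a finset -/
noncomputable def MrectWF (m w : ℤ) : Finset V := (MprimeWF m w).filter fun v => tM m v ≤ tauW m w

/-- `𝓡^△_w` as a finset -/
noncomputable def RtriWF (m w : ℤ) : Finset V := (RprimeWF m w).filter fun u => tauW m w + 1 ≤ tR u

/-- `𝓜^△_w` as a finset -/
noncomputable def MtriWF (m w : ℤ) : Finset V := (MprimeWF m w).filter fun v => tauW m w + 1 ≤ tM m v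

/-- `λ(u) = λ(δ_w - a(u))` -/
def lamU (m w : ℤ) (u : V) : ℤ := lamZ (deltaW m w - u.1)

/-- the order `≺` on `𝓡^▭_w` -/
def precR (m w : ℤ) (u u' : V) : Prop :=
  lamU m w u < lamU m w u' ∨
    (lamU m w u = lamU m w u' ∧ u'.1 < u.1) ∨
      (lamU m w u = lamU m w u' ∧ u.1 = u'.1 ∧ tR u < tR u')

/-- the order `≺` on `𝓜^▭_w` -/
def precM (m w : ℤ) (v v' : V) : Prop :=
  lamU m w v < lamU m w v' ∨
    (lamU m w v = lamU m w v' ∧ v'.1 < v.1) ∨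
      (lamU m w v = lamU m w v' ∧ v.1 = v'.1 ∧ tM m v < tM m v')

/-- the bijection `φ̂_{ℓ₀} : 𝓑 → 𝓒` on the abstract special block;
on `𝓑`, points are `u⁰_ℓ = (0, 3ℓ, -2ℓ)` and `u¹_ℓ = (1, 3ℓ+1, -2ℓ-1)`. -/
def phiHatB (m n l0 : ℤ) (u : V) : V :=
  if u.1 = 0 then
    if u.2.1 / 3 < l0 then (0, 3 * (n + u.2.1 / 3 + 1), m - 2 * (n + u.2.1 / 3 + 1))
    else if u.2.1 / 3 = l0 then (1, 3 * (n + l0) + 1, m - 2 * (n + l0) - 1)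
    else (0, 3 * (n + u.2.1 / 3), m - 2 * (n + u.2.1 / 3))
  else
    if (u.2.1 - 1) / 3 < l0 then
      (1, 3 * (n + (u.2.1 - 1) / 3) + 1, m - 2 * (n + (u.2.1 - 1) / 3) - 1)
    else (1, 3 * (n + (u.2.1 - 1) / 3 + 1) + 1, m - 2 * (n + (u.2.1 - 1) / 3 + 1) - 1)

/-- the abstract special block `𝓑`: `u⁰_ℓ = ℓ·e₂` for `0 ≤ ℓ ≤ τ+1`,
`u¹_ℓ = e₁ + ℓ·e₂` for `0 ≤ ℓ ≤ τ` -/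
def BblockF (t : ℕ) : Finset V :=
  ((Finset.range (t + 2)).image fun l : ℕ => ((0 : ℤ), 3 * (l : ℤ), -2 * (l : ℤ))) ∪
    ((Finset.range (t + 1)).image fun l : ℕ => ((1 : ℤ), 3 * (l : ℤ) + 1, -2 * (l : ℤ) - 1))

/-- the abstract special block `𝓒`: `v⁰_ℓ = (0,0,m) + (n+ℓ)·e₂` for `1 ≤ ℓ ≤ τ+1`,
`v¹_ℓ = (0,0,m) + e₁ + (n+ℓ)·e₂` for `0 ≤ ℓ ≤ τ+1` -/
def CblockF (m n t : ℕ) : Finset V :=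
  ((Finset.Icc 1 (t + 1)).image fun l : ℕ =>
      ((0 : ℤ), 3 * ((n : ℤ) + (l : ℤ)), (m : ℤ) - 2 * ((n : ℤ) + (l : ℤ)))) ∪
    ((Finset.range (t + 2)).image fun l : ℕ =>
      ((1 : ℤ), 3 * ((n : ℤ) + (l : ℤ)) + 1, (m : ℤ) - 2 * ((n : ℤ) + (l : ℤ)) - 1))

/-- `δ_{w,n} = δ_w - 6n` -/
def deltaWN (m w n : ℤ) : ℤ := deltaW m w - 6 * n

/-- `n_max = ⌊(6m - 9 - w)/6⌋` -/
def nmaxZ (m w : ℤ) : ℤ := (6 * m - 9 - w) / 6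

/-- the special block `𝓑_n ⊆ 𝓡'_w` -/
def Bblock (m w n : ℤ) : Set V :=
  {u ∈ Rprime m | wtR u = w ∧ (u.1 = deltaWN m w n ∨ u.1 = deltaWN m w n - 1) ∧
    3 * n - 1 + etaZ w ≤ u.2.1}

/-- the special block `𝓒_n ⊆ 𝓜'_w` -/
def Cblock (m w n : ℤ) : Set V :=
  {v ∈ Mprime m | wtM m v = w ∧ (v.1 = deltaWN m w n ∨ v.1 = deltaWN m w n - 1) ∧
    6 * n + 2 ≤ v.2.1}

/-- the corner monomial `u⁰_{n,0} = (δ_{w,n}-1, 3n-1+η(w), c_w)` of `𝓑_n` -/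
def cornerB (m w n : ℤ) : V := (deltaWN m w n - 1, 3 * n - 1 + etaZ w, 2 * (tauW m w + 1))

def psiMap (m : ℤ) (u : V) : V := (3 * (m - 1) - u.1 - u.2.1, u.1, 1 + u.2.1 + u.2.2)

def psiInv (m : ℤ) (v : V) : V :=
  (v.2.1, 3 * (m - 1) - v.1 - v.2.1, v.1 + v.2.1 + v.2.2 - (3 * m - 2))

/-- **Proposition `Mstructure`.** `ψ` is a weight-preserving bijection
`𝓡 → 𝓜` with the stated inverse; in particular `𝓡_w` and `𝓜_w` have the same
cardinality for every `w ∈ ℕ`. -/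
theorem psi_bijection (m : ℤ) (hm : 2 ≤ m) :
    Set.BijOn (psiMap m) (Rfull m) (Mfull m) ∧
    Set.InvOn (psiInv m) (psiMap m) (Rfull m) (Mfull m) ∧
    (∀ u ∈ Rfull m, wtM m (psiMap m u) = wtR u) ∧
    ∀ w : ℕ, ({u ∈ Rfull m | wtR u = (w : ℤ)}).ncard =
      ({v ∈ Mfull m | wtM m v = (w : ℤ)}).ncard := by
  have hmaps : Set.MapsTo (psiMap m) (Rfull m) (Mfull m) := by
    rintro ⟨a, b, c⟩ hu
    simp only [Rfull, Mfull, nonnegV, psiMap, Set.mem_setOf_eq] at *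
    omega
  have hmaps' : Set.MapsTo (psiInv m) (Mfull m) (Rfull m) := by
    rintro ⟨i, j, k⟩ hv
    simp only [Rfull, Mfull, nonnegV, psiInv, Set.mem_setOf_eq] at *
    omega
  have hli : Set.LeftInvOn (psiInv m) (psiMap m) (Rfull m) := by
    rintro ⟨a, b, c⟩ _
    simp only [psiMap, psiInv, Prod.mk.injEq]
    refine ⟨trivial, by ring, by ring⟩
  have hri : Set.RightInvOn (psiInv m) (psiMap m) (Mfull m) := by
    rintro ⟨i, j, k⟩ _
    simp only [psiMap, psiInv, Prod.mk.injEq]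
    refine ⟨by ring, trivial, by ring⟩
  have hinv : Set.InvOn (psiInv m) (psiMap m) (Rfull m) (Mfull m) := ⟨hli, hri⟩
  have hbij : Set.BijOn (psiMap m) (Rfull m) (Mfull m) :=
    hinv.bijOn hmaps hmaps'
  have hwt : ∀ u ∈ Rfull m, wtM m (psiMap m u) = wtR u := by
    rintro ⟨a, b, c⟩ _
    simp only [psiMap, wtM, wtR]; ring
  refine ⟨hbij, hinv, hwt, fun w => ?_⟩
  have himg : psiMap m '' {u ∈ Rfull m | wtR u = (w : ℤ)} =
      {v ∈ Mfull m | wtM m v = (w : ℤ)} := by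
    ext v
    constructor
    · rintro ⟨u, ⟨hu, hw⟩, rfl⟩
      exact ⟨hmaps hu, by rw [hwt u hu]; exact hw⟩
    · rintro ⟨hv, hw⟩
      exact ⟨psiInv m v, ⟨hmaps' hv, by rw [← hri hv] at hw; rwa [hwt _ (hmaps' hv)] at hw⟩,
        hri hv⟩
  rw [← himg]
  exact (Set.ncard_image_of_injOn (hbij.injOn.mono (Set.sep_subset _ _))).symm
end

section
/- Fix an integer m ≥ 2. Let g ∈ k[x,y,z] be a wt-homogeneous polynomial of weight 3m in which the monomial z^m occurs with nonzero coefficient. Let I_g = (x,y)^{3m−2} + (g) and J = (x,y,z)^{3m−2}. Then for every w ∈ ℕ, the k-dimension of the space of wt-homogeneous polynomials of weight w belonging to I_g equals the k-dimension of the space of wt-homogeneous polynomials of weight w belonging to J; equivalently, k[x,y,z]/I_g and k[x,y,z]/J are isomorphic as wt-graded k-vector spaces. -/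
open MvPolynomial Finsupp Finset

namespace SHF


noncomputable section

variable {k : Type} [Field k]

lemma weight_eval (d : Fin 3 →₀ ℕ) :
    (Finsupp.weight (![1, 2, 3] : Fin 3 → ℕ)) d = d 0 + 2 * d 1 + 3 * d 2 := by
  rw [Finsupp.weight_apply, Finsupp.sum_fintype]
  · rw [Fin.sum_univ_three]
    simp [smul_eq_mul]
    ring
  · intro i; exact zero_smul _ _

def tf (t : ℕ × ℕ × ℕ) : Fin 3 →₀ ℕ :=
  Finsupp.single 0 t.1 + Finsupp.single 1 t.2.1 + Finsupp.single 2 t.2.2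

@[simp] lemma tf_apply_0 (t : ℕ × ℕ × ℕ) : tf t 0 = t.1 := by
  simp [tf, Finsupp.single_apply]

@[simp] lemma tf_apply_1 (t : ℕ × ℕ × ℕ) : tf t 1 = t.2.1 := by
  simp [tf, Finsupp.single_apply]

@[simp] lemma tf_apply_2 (t : ℕ × ℕ × ℕ) : tf t 2 = t.2.2 := by
  simp [tf, Finsupp.single_apply]

lemma tf_eta (d : Fin 3 →₀ ℕ) : tf (d 0, d 1, d 2) = d := by
  ext i
  fin_cases i <;> simp [tf, Finsupp.single_apply]

lemma tf_inj : Function.Injective tf := by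
  intro s t h
  have h0 := congrArg (fun f : Fin 3 →₀ ℕ => f 0) h
  have h1 := congrArg (fun f : Fin 3 →₀ ℕ => f 1) h
  have h2 := congrArg (fun f : Fin 3 →₀ ℕ => f 2) h
  simp at h0 h1 h2
  exact Prod.ext h0 (Prod.ext h1 h2)

lemma weight_tf (t : ℕ × ℕ × ℕ) :
    (Finsupp.weight (![1, 2, 3] : Fin 3 → ℕ)) (tf t) = t.1 + 2 * t.2.1 + 3 * t.2.2 := by
  rw [weight_eval]; simp

lemma sum2 (d : Fin 3 →₀ ℕ) : ∑ i ∈ ({0, 1} : Finset (Fin 3)), d i = d 0 + d 1 := by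
  rw [show ({0, 1} : Finset (Fin 3)) = insert 0 {1} from rfl,
    Finset.sum_insert (by decide), Finset.sum_singleton]

lemma sum3 (d : Fin 3 →₀ ℕ) : ∑ i ∈ ({0, 1, 2} : Finset (Fin 3)), d i = d 0 + d 1 + d 2 := by
  rw [show ({0, 1, 2} : Finset (Fin 3)) = insert 0 (insert 1 {2}) from rfl,
    Finset.sum_insert (by decide), Finset.sum_insert (by decide), Finset.sum_singleton]
  ring





/-- The ideal of polynomials all of whose monomials have `S`-degree at least `n`. -/
def degIdeal (S : Finset (Fin 3)) (n : ℕ) : Ideal (MvPolynomial (Fin 3) k) where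
  carrier := {p | ∀ d ∈ p.support, n ≤ ∑ i ∈ S, d i}
  zero_mem' := by simp
  add_mem' := by
    intro a b ha hb d hd
    rcases Finset.mem_union.mp (MvPolynomial.support_add hd) with h | h
    · exact ha d h
    · exact hb d h
  smul_mem' := by
    intro c x hx d hd
    rw [smul_eq_mul] at hd
    obtain ⟨e, he, f, hf, rfl⟩ := Finset.mem_add.mp (MvPolynomial.support_mul _ _ hd)
    calc n ≤ ∑ i ∈ S, f i := hx f hf
      _ ≤ ∑ i ∈ S, (e + f) i := Finset.sum_le_sum (fun i _ => by simp)

lemma mem_degIdeal {S : Finset (Fin 3)} {n : ℕ} {p : MvPolynomial (Fin 3) k} :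
    p ∈ degIdeal S n ↔ ∀ d ∈ p.support, n ≤ ∑ i ∈ S, d i := Iff.rfl

lemma degIdeal_mul {S : Finset (Fin 3)} {a b : ℕ} {p q : MvPolynomial (Fin 3) k}
    (hp : p ∈ degIdeal S a) (hq : q ∈ degIdeal S b) : p * q ∈ degIdeal S (a + b) := by
  intro d hd
  obtain ⟨e, he, f, hf, rfl⟩ := Finset.mem_add.mp (MvPolynomial.support_mul _ _ hd)
  have h1 := hp e he
  have h2 := hq f hf
  have : ∑ i ∈ S, (e + f) i = (∑ i ∈ S, e i) + ∑ i ∈ S, f i := by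
    rw [← Finset.sum_add_distrib]; simp
  omega

lemma span_le_degIdeal (S : Finset (Fin 3)) :
    Ideal.span (X '' (S : Set (Fin 3)) : Set (MvPolynomial (Fin 3) k)) ≤ degIdeal S 1 := by
  rw [Ideal.span_le]
  intro x hx
  obtain ⟨i, hi, rfl⟩ := hx
  intro d hd
  rw [MvPolynomial.support_X, Finset.mem_singleton] at hd
  subst hd
  rw [Finset.sum_eq_single i (fun j _ hj => Finsupp.single_eq_of_ne' (Ne.symm hj))
    (fun h => absurd hi h)]
  simp

lemma pow_span_le_degIdeal (S : Finset (Fin 3)) (n : ℕ) :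
    (Ideal.span (X '' (S : Set (Fin 3)) : Set (MvPolynomial (Fin 3) k))) ^ n
      ≤ degIdeal S n := by
  induction n with
  | zero => intro p _ d _; exact Nat.zero_le _
  | succ n ih =>
    rw [pow_succ]
    refine Ideal.mul_le.mpr fun r hr x hx => ?_
    exact degIdeal_mul (ih hr) (span_le_degIdeal S hx)

lemma prod_pow_mem (I : Ideal (MvPolynomial (Fin 3) k)) (d : Fin 3 →₀ ℕ) (T : Finset (Fin 3))
    (hX : ∀ i ∈ T, X i ∈ I) : (∏ i ∈ T, X i ^ d i) ∈ I ^ (∑ i ∈ T, d i) := by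
  classical
  induction T using Finset.induction with
  | empty => simp [Ideal.one_eq_top]
  | @insert a T ha ih =>
    rw [Finset.prod_insert ha, Finset.sum_insert ha, pow_add]
    exact Ideal.mul_mem_mul (Ideal.pow_mem_pow (hX a (Finset.mem_insert_self _ _)) _)
      (ih fun i hi => hX i (Finset.mem_insert_of_mem hi))

lemma mem_pow_span (S : Finset (Fin 3)) (n : ℕ) (p : MvPolynomial (Fin 3) k)
    (hp : ∀ d ∈ p.support, n ≤ ∑ i ∈ S, d i) :
    p ∈ (Ideal.span (X '' (S : Set (Fin 3)) : Set (MvPolynomial (Fin 3) k))) ^ n := by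
  classical
  nth_rewrite 1 [p.as_sum]
  refine Ideal.sum_mem _ fun d hd => ?_
  rw [MvPolynomial.monomial_eq]
  refine Ideal.mul_mem_left _ _ ?_
  rw [Finsupp.prod_fintype _ _ (fun i => pow_zero _), ← Finset.prod_mul_prod_compl S]
  refine Ideal.mul_mem_right _ _ ?_
  refine SetLike.le_def.mp (Ideal.pow_le_pow_right (hp d hd)) ?_
  exact prod_pow_mem _ d S fun i hi => Ideal.subset_span ⟨i, hi, rfl⟩







lemma coord {e f D : Fin 3 →₀ ℕ} (h : e + f = D) (i : Fin 3) : e i + f i = D i := by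
  rw [← h]; simp

lemma key_lemma (m n : ℕ) (g h : MvPolynomial (Fin 3) k)
    (hg : IsWeightedHomogeneous (![1, 2, 3] : Fin 3 → ℕ) g (3 * m))
    (hz : coeff (Finsupp.single (2 : Fin 3) m) g ≠ 0)
    (hh : h ≠ 0) (hlow : ∀ d ∈ h.support, d 0 + d 1 < n) :
    ∃ D ∈ (h * g).support, D 0 + D 1 < n := by
  classical
  obtain ⟨d, hd, hmax⟩ := Finset.exists_max_image h.support (fun d => d 2)
    (Finset.nonempty_iff_ne_empty.mpr (fun hc => hh (MvPolynomial.support_eq_empty.mp hc)))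
  refine ⟨d + Finsupp.single 2 m, ?_, ?_⟩
  · rw [MvPolynomial.mem_support_iff, MvPolynomial.coeff_mul]
    rw [Finset.sum_eq_single_of_mem (d, Finsupp.single 2 m)
      (Finset.HasAntidiagonal.mem_antidiagonal.mpr rfl) ?_]
    · exact mul_ne_zero (MvPolynomial.mem_support_iff.mp hd) hz
    · rintro ⟨e, f⟩ hef hne
      rw [Finset.HasAntidiagonal.mem_antidiagonal] at hef
      by_cases hfe : coeff e h = 0
      · simp [hfe]
      by_cases hfg : coeff f g = 0
      · simp [hfg]
      exfalso
      have hwf := hg hfg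
      rw [weight_eval] at hwf
      have he2 : e 2 ≤ d 2 := hmax e (MvPolynomial.mem_support_iff.mpr hfe)
      have h0 := coord hef 0
      have h1 := coord hef 1
      have h2 := coord hef 2
      have s0 : (Finsupp.single (2 : Fin 3) m) 0 = 0 := Finsupp.single_eq_of_ne' (by decide)
      have s1 : (Finsupp.single (2 : Fin 3) m) 1 = 0 := Finsupp.single_eq_of_ne' (by decide)
      have s2 : (Finsupp.single (2 : Fin 3) m) 2 = m := Finsupp.single_eq_same
      simp only [Finsupp.add_apply, s0, s1, s2] at h0 h1 h2
      have hf2 : f 2 = m := by omega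
      have hf0 : f 0 = 0 := by omega
      have hf1 : f 1 = 0 := by omega
      have hfeq : f = Finsupp.single 2 m := by
        ext i
        fin_cases i
        · exact hf0.trans s0.symm
        · exact hf1.trans s1.symm
        · exact hf2.trans s2.symm
      apply hne
      have heeq : e = d := by
        rw [hfeq] at hef
        exact add_right_cancel hef
      rw [heeq, hfeq]
  · have := hlow d hd
    have s0 : (Finsupp.single (2 : Fin 3) m) 0 = 0 := Finsupp.single_eq_of_ne' (by decide)
    have s1 : (Finsupp.single (2 : Fin 3) m) 1 = 0 := Finsupp.single_eq_of_ne' (by decide)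
    simp only [Finsupp.add_apply, s0, s1]
    omega

lemma comp_mul (g r : MvPolynomial (Fin 3) k) (u j : ℕ)
    (hg : IsWeightedHomogeneous (![1, 2, 3] : Fin 3 → ℕ) g u) :
    weightedHomogeneousComponent (![1, 2, 3] : Fin 3 → ℕ) (j + u) (r * g)
      = (weightedHomogeneousComponent (![1, 2, 3] : Fin 3 → ℕ) j r) * g := by
  classical
  ext D
  rw [coeff_weightedHomogeneousComponent, MvPolynomial.coeff_mul, MvPolynomial.coeff_mul]
  by_cases hD : (Finsupp.weight (![1, 2, 3] : Fin 3 → ℕ)) D = j + u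
  · rw [if_pos hD]
    refine Finset.sum_congr rfl ?_
    rintro ⟨e, f⟩ hef
    rw [Finset.HasAntidiagonal.mem_antidiagonal] at hef
    dsimp only at hef ⊢
    rw [coeff_weightedHomogeneousComponent]
    by_cases hfg : coeff f g = 0
    · simp [hfg]
    have hwf := hg hfg
    have hadd : (Finsupp.weight (![1, 2, 3] : Fin 3 → ℕ)) e
        + (Finsupp.weight (![1, 2, 3] : Fin 3 → ℕ)) f
        = (Finsupp.weight (![1, 2, 3] : Fin 3 → ℕ)) D := by
      rw [← hef, map_add]
    rw [if_pos (by omega)]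
  · rw [if_neg hD]
    symm
    refine Finset.sum_eq_zero ?_
    rintro ⟨e, f⟩ hef
    rw [Finset.HasAntidiagonal.mem_antidiagonal] at hef
    dsimp only at hef ⊢
    rw [coeff_weightedHomogeneousComponent]
    by_cases hfg : coeff f g = 0
    · simp [hfg]
    by_cases hwe : (Finsupp.weight (![1, 2, 3] : Fin 3 → ℕ)) e = j
    · exfalso; exact hD (by rw [← hef, map_add, hwe, hg hfg])
    · rw [if_neg hwe, zero_mul]

lemma comp_low (g r : MvPolynomial (Fin 3) k) (u w : ℕ)
    (hg : IsWeightedHomogeneous (![1, 2, 3] : Fin 3 → ℕ) g u) (hw : w < u) :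
    weightedHomogeneousComponent (![1, 2, 3] : Fin 3 → ℕ) w (r * g) = 0 := by
  refine weightedHomogeneousComponent_eq_zero' _ _ ?_
  intro d hd
  obtain ⟨e, he, f, hf, rfl⟩ := Finset.mem_add.mp (MvPolynomial.support_mul _ _ hd)
  have hwf := hg (MvPolynomial.mem_support_iff.mp hf)
  rw [map_add, hwf]
  omega

lemma span_supp (p : MvPolynomial (Fin 3) k) (s : Set (MvPolynomial (Fin 3) k))
    (hs : ∀ d ∈ p.support, (monomial d 1 : MvPolynomial (Fin 3) k) ∈ s) :
    p ∈ Submodule.span k s := by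
  have hrw : p = ∑ d ∈ p.support, coeff d p • (monomial d 1 : MvPolynomial (Fin 3) k) := by
    conv_lhs => rw [p.as_sum]
    refine Finset.sum_congr rfl fun d _ => ?_
    rw [MvPolynomial.smul_monomial, smul_eq_mul, mul_one]
  rw [hrw]
  exact Submodule.sum_mem _ fun d hd =>
    Submodule.smul_mem _ _ (Submodule.subset_span (hs d hd))




def base (w : ℕ) : Finset (ℕ × ℕ × ℕ) :=
  Finset.range (w + 1) ×ˢ Finset.range (w + 1) ×ˢ Finset.range (w + 1)

lemma mem_base {w : ℕ} {t : ℕ × ℕ × ℕ} :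
    t ∈ base w ↔ t.1 ≤ w ∧ t.2.1 ≤ w ∧ t.2.2 ≤ w := by
  simp [base, Finset.mem_product, Nat.lt_succ_iff]

def DJ (m w : ℕ) : Finset (ℕ × ℕ × ℕ) :=
  (base w).filter fun t =>
    t.1 + 2 * t.2.1 + 3 * t.2.2 = w ∧ 3 * m - 2 ≤ t.1 + t.2.1 + t.2.2

def DM (m w : ℕ) : Finset (ℕ × ℕ × ℕ) :=
  (base w).filter fun t =>
    t.1 + 2 * t.2.1 + 3 * t.2.2 = w ∧ 3 * m - 2 ≤ t.1 + t.2.1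

def DG (m w : ℕ) : Finset (ℕ × ℕ × ℕ) :=
  (base w).filter fun t =>
    t.1 + 2 * t.2.1 + 3 * t.2.2 + 3 * m = w ∧ t.1 + t.2.1 < 3 * m - 2

lemma card_eq (m w : ℕ) (hm : 2 ≤ m) : (DJ m w).card = (DM m w).card + (DG m w).card := by
  classical
  set DL : Finset (ℕ × ℕ × ℕ) := (base w).filter (fun t =>
    t.1 + 2 * t.2.1 + 3 * t.2.2 = w ∧ t.1 + t.2.1 < 3 * m - 2
      ∧ 3 * m - 2 ≤ t.1 + t.2.1 + t.2.2) with hDL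
  have hunion : DJ m w = DM m w ∪ DL := by
    ext t
    simp only [DJ, DM, hDL, Finset.mem_union, Finset.mem_filter]
    constructor
    · rintro ⟨hb, h1, h2⟩
      by_cases hc : 3 * m - 2 ≤ t.1 + t.2.1
      · exact Or.inl ⟨hb, h1, hc⟩
      · exact Or.inr ⟨hb, h1, by omega, h2⟩
    · rintro (⟨hb, h1, h2⟩ | ⟨hb, h1, h2, h3⟩)
      · exact ⟨hb, h1, by omega⟩
      · exact ⟨hb, h1, h3⟩
  have hdisj : Disjoint (DM m w) DL := by
    rw [Finset.disjoint_left]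
    intro t ht ht'
    rw [DM, Finset.mem_filter] at ht
    rw [hDL, Finset.mem_filter] at ht'
    omega
  rw [hunion, Finset.card_union_of_disjoint hdisj]
  congr 1
  refine Finset.card_bij
    (fun t _ => (t.2.1, 3 * m - 2 - 1 - (t.1 + t.2.1), t.1 + t.2.1 + t.2.2 - (3 * m - 2)))
    ?_ ?_ ?_
  · intro t ht
    rw [hDL, Finset.mem_filter, mem_base] at ht
    rw [DG, Finset.mem_filter, mem_base]
    dsimp only
    omega
  · rintro ⟨a1, b1, c1⟩ h1 ⟨a2, b2, c2⟩ h2 heq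
    rw [hDL, Finset.mem_filter, mem_base] at h1 h2
    dsimp only at h1 h2
    simp only [Prod.mk.injEq] at heq ⊢
    omega
  · rintro ⟨a, b, c⟩ ht'
    rw [DG, Finset.mem_filter, mem_base] at ht'
    dsimp only at ht'
    refine ⟨(3 * m - 2 - 1 - (a + b), a, c + b + 1), ?_, ?_⟩
    · rw [hDL, Finset.mem_filter, mem_base]
      dsimp only
      omega
    · dsimp only
      simp only [Prod.mk.injEq]
      refine ⟨trivial, ?_, ?_⟩ <;> omega


lemma finrank_J (m w : ℕ) :
    Module.finrank k
      ↥(weightedHomogeneousSubmodule k (![1, 2, 3] : Fin 3 → ℕ) w ⊓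
        Submodule.restrictScalars k
          ((Ideal.span {X (0 : Fin 3), X 1, X 2} : Ideal (MvPolynomial (Fin 3) k)) ^ (3 * m - 2)))
      = (DJ m w).card := by
  classical
  have hset : ({X (0 : Fin 3), X 1, X 2} : Set (MvPolynomial (Fin 3) k))
      = X '' ((({0, 1, 2} : Finset (Fin 3)) : Set (Fin 3))) := by
    simp [Set.image_insert_eq]
  set fam : ↥(DJ m w) → MvPolynomial (Fin 3) k := fun t => monomial (tf t.1) 1 with hfam
  have hind : LinearIndependent k fam := by
    have h1 : fam = (fun d => (monomial d 1 : MvPolynomial (Fin 3) k)) ∘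
        (fun t : ↥(DJ m w) => tf t.1) := rfl
    rw [h1, ← MvPolynomial.coe_basisMonomials]
    exact (MvPolynomial.basisMonomials _ _).linearIndependent.comp _
      (tf_inj.comp Subtype.val_injective)
  have hspan : Submodule.span k (Set.range fam)
      = weightedHomogeneousSubmodule k (![1, 2, 3] : Fin 3 → ℕ) w ⊓
        Submodule.restrictScalars k
          ((Ideal.span {X (0 : Fin 3), X 1, X 2} : Ideal (MvPolynomial (Fin 3) k)) ^ (3 * m - 2)) := by
    apply le_antisymm
    · rw [Submodule.span_le]
      rintro _ ⟨t, rfl⟩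
      have htm := t.2
      simp only [DJ, Finset.mem_filter, mem_base] at htm
      obtain ⟨hb, hwt, hsum⟩ := htm
      refine Submodule.mem_inf.mpr ⟨?_, ?_⟩
      · exact isWeightedHomogeneous_monomial _ _ _ (by rw [weight_tf]; exact hwt)
      · rw [Submodule.restrictScalars_mem, hset]
        apply mem_pow_span
        intro d hd
        rw [MvPolynomial.support_monomial, if_neg one_ne_zero, Finset.mem_singleton] at hd
        subst hd
        rw [sum3]
        simp only [tf_apply_0, tf_apply_1, tf_apply_2]
        omega
    · intro p hp
      rw [Submodule.mem_inf] at hp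
      obtain ⟨hph, hpJ⟩ := hp
      rw [Submodule.restrictScalars_mem, hset] at hpJ
      have hdeg := pow_span_le_degIdeal ({0, 1, 2} : Finset (Fin 3)) (3 * m - 2) hpJ
      apply span_supp
      intro d hd'
      have hw : (Finsupp.weight (![1, 2, 3] : Fin 3 → ℕ)) d = w :=
        (hph : IsWeightedHomogeneous _ p w) (MvPolynomial.mem_support_iff.mp hd')
      rw [weight_eval] at hw
      have hge := hdeg d hd'
      rw [sum3] at hge
      refine ⟨⟨(d 0, d 1, d 2), ?_⟩, ?_⟩
      · simp only [DJ, Finset.mem_filter, mem_base]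
        omega
      · show monomial (tf (d 0, d 1, d 2)) 1 = monomial d 1
        rw [tf_eta]
  have b : Module.Basis ↥(DJ m w) k
      ↥(weightedHomogeneousSubmodule k (![1, 2, 3] : Fin 3 → ℕ) w ⊓
        Submodule.restrictScalars k
          ((Ideal.span {X (0 : Fin 3), X 1, X 2} : Ideal (MvPolynomial (Fin 3) k)) ^ (3 * m - 2))) :=
    (Module.Basis.span hind).map (LinearEquiv.ofEq _ _ hspan)
  rw [Module.finrank_eq_card_basis b, Fintype.card_coe]

/-- k-submodule of polynomials all of whose monomials have `(x,y)`-degree `< n`. -/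
def loSub (n : ℕ) : Submodule k (MvPolynomial (Fin 3) k) where
  carrier := {p | ∀ d ∈ p.support, d 0 + d 1 < n}
  zero_mem' := by simp
  add_mem' := by
    intro a b ha hb d hd
    rcases Finset.mem_union.mp (MvPolynomial.support_add hd) with h | h
    · exact ha d h
    · exact hb d h
  smul_mem' := by
    intro c x hx d hd
    rw [MvPolynomial.mem_support_iff, MvPolynomial.coeff_smul] at hd
    exact hx d (MvPolynomial.mem_support_iff.mpr (right_ne_zero_of_smul hd))

lemma finrank_I (m w : ℕ) (hm : 2 ≤ m) (g : MvPolynomial (Fin 3) k)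
    (hg : IsWeightedHomogeneous (![1, 2, 3] : Fin 3 → ℕ) g (3 * m))
    (hz : coeff (Finsupp.single (2 : Fin 3) m) g ≠ 0) :
    Module.finrank k
      ↥(weightedHomogeneousSubmodule k (![1, 2, 3] : Fin 3 → ℕ) w ⊓
        Submodule.restrictScalars k
          (Ideal.span {X (0 : Fin 3), X 1} ^ (3 * m - 2) + Ideal.span {g}))
      = (DM m w).card + (DG m w).card := by
  classical
  have hg0 : g ≠ 0 := fun hc => hz (by simp [hc])
  have hset : ({X (0 : Fin 3), X 1} : Set (MvPolynomial (Fin 3) k))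
      = X '' ((({0, 1} : Finset (Fin 3)) : Set (Fin 3))) := by
    simp [Set.image_insert_eq]
  set famM : ↥(DM m w) → MvPolynomial (Fin 3) k := fun t => monomial (tf t.1) 1 with hfamM
  set famG : ↥(DG m w) → MvPolynomial (Fin 3) k := fun t => monomial (tf t.1) 1 * g with hfamG
  -- membership of any "high" homogeneous polynomial in the span
  have spanDM : ∀ p' : MvPolynomial (Fin 3) k,
      IsWeightedHomogeneous (![1, 2, 3] : Fin 3 → ℕ) p' w →
      (∀ d ∈ p'.support, 3 * m - 2 ≤ d 0 + d 1) →
      p' ∈ Submodule.span k (Set.range (Sum.elim famM famG)) := by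
    intro p' hh' hsup
    apply span_supp
    intro d hd
    have hw : (Finsupp.weight (![1, 2, 3] : Fin 3 → ℕ)) d = w :=
      hh' (MvPolynomial.mem_support_iff.mp hd)
    rw [weight_eval] at hw
    have hge := hsup d hd
    refine ⟨Sum.inl ⟨(d 0, d 1, d 2), ?_⟩, ?_⟩
    · simp only [DM, Finset.mem_filter, mem_base]
      omega
    · show monomial (tf (d 0, d 1, d 2)) 1 = monomial d 1
      rw [tf_eta]
  have hindM : LinearIndependent k famM := by
    have h1 : famM = (fun d => (monomial d 1 : MvPolynomial (Fin 3) k)) ∘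
        (fun t : ↥(DM m w) => tf t.1) := rfl
    rw [h1, ← MvPolynomial.coe_basisMonomials]
    exact (MvPolynomial.basisMonomials _ _).linearIndependent.comp _
      (tf_inj.comp Subtype.val_injective)
  have hkermul : LinearMap.ker (LinearMap.mulRight k g) = ⊥ := by
    rw [LinearMap.ker_eq_bot]
    intro a b hab
    rw [LinearMap.mulRight_apply, LinearMap.mulRight_apply] at hab
    exact mul_right_cancel₀ hg0 hab
  have hindG : LinearIndependent k famG := by
    have h1 : famG = (LinearMap.mulRight k g) ∘ ((fun d => (monomial d 1 : MvPolynomial (Fin 3) k)) ∘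
        (fun t : ↥(DG m w) => tf t.1)) := rfl
    rw [h1]
    refine LinearIndependent.map' ?_ _ hkermul
    rw [← MvPolynomial.coe_basisMonomials]
    exact (MvPolynomial.basisMonomials _ _).linearIndependent.comp _
      (tf_inj.comp Subtype.val_injective)
  have hdisjLR : Disjoint (Submodule.span k (Set.range famM))
      (Submodule.span k (Set.range famG)) := by
    rw [Submodule.disjoint_def]
    intro v hvM hvG
    have h1 : v ∈ Submodule.restrictScalars k
        ((degIdeal ({0, 1} : Finset (Fin 3)) (3 * m - 2) : Ideal (MvPolynomial (Fin 3) k))) := by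
      refine Submodule.span_le.mpr ?_ hvM
      rintro _ ⟨t, rfl⟩
      rw [SetLike.mem_coe, Submodule.restrictScalars_mem]
      intro d hd
      rw [MvPolynomial.support_monomial, if_neg one_ne_zero, Finset.mem_singleton] at hd
      subst hd
      have htm := t.2
      simp only [DM, Finset.mem_filter, mem_base] at htm
      rw [sum2]
      simp only [tf_apply_0, tf_apply_1]
      omega
    rw [Submodule.restrictScalars_mem] at h1
    have h2 : v ∈ Submodule.map (LinearMap.mulRight k g) (loSub (3 * m - 2)) := by
      refine Submodule.span_le.mpr ?_ hvG
      rintro _ ⟨t, rfl⟩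
      rw [SetLike.mem_coe, Submodule.mem_map]
      refine ⟨monomial (tf t.1) 1, ?_, by rw [LinearMap.mulRight_apply]⟩
      intro d hd
      rw [MvPolynomial.support_monomial, if_neg one_ne_zero, Finset.mem_singleton] at hd
      subst hd
      have htm := t.2
      simp only [DG, Finset.mem_filter, mem_base] at htm
      simp only [tf_apply_0, tf_apply_1]
      omega
    obtain ⟨h, hhmem, hveq⟩ := h2
    rw [LinearMap.mulRight_apply] at hveq
    subst hveq
    by_cases h0 : h = 0
    · rw [h0, zero_mul]
    exfalso
    obtain ⟨D, hD, hlt⟩ := key_lemma m (3 * m - 2) g h hg hz h0 hhmem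
    have := h1 D hD
    rw [sum2] at this
    omega
  have hind : LinearIndependent k (Sum.elim famM famG) :=
    hindM.sum_type hindG hdisjLR
  have hspan : Submodule.span k (Set.range (Sum.elim famM famG))
      = weightedHomogeneousSubmodule k (![1, 2, 3] : Fin 3 → ℕ) w ⊓
        Submodule.restrictScalars k
          (Ideal.span {X (0 : Fin 3), X 1} ^ (3 * m - 2) + Ideal.span {g}) := by
    apply le_antisymm
    · rw [Submodule.span_le]
      rintro _ ⟨t, rfl⟩
      cases t with
      | inl t =>
        rw [show Sum.elim famM famG (Sum.inl t) = (monomial (tf t.1) 1 : MvPolynomial (Fin 3) k)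
          from rfl]
        have htm := t.2
        simp only [DM, Finset.mem_filter, mem_base] at htm
        obtain ⟨hb, hwt, hsum⟩ := htm
        refine Submodule.mem_inf.mpr ⟨?_, ?_⟩
        · exact isWeightedHomogeneous_monomial _ _ _ (by rw [weight_tf]; exact hwt)
        · rw [Submodule.restrictScalars_mem, Ideal.add_eq_sup]
          refine Submodule.mem_sup_left ?_
          rw [hset]
          apply mem_pow_span
          intro d hd
          rw [MvPolynomial.support_monomial, if_neg one_ne_zero, Finset.mem_singleton] at hd
          subst hd
          rw [sum2]
          simp only [tf_apply_0, tf_apply_1]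
          omega
      | inr t =>
        rw [show Sum.elim famM famG (Sum.inr t)
            = (monomial (tf t.1) 1 : MvPolynomial (Fin 3) k) * g from rfl]
        have htm := t.2
        simp only [DG, Finset.mem_filter, mem_base] at htm
        obtain ⟨hb, hwt, hlow⟩ := htm
        refine Submodule.mem_inf.mpr ⟨?_, ?_⟩
        · have h1 : IsWeightedHomogeneous (![1, 2, 3] : Fin 3 → ℕ)
              (monomial (tf t.1) 1 : MvPolynomial (Fin 3) k)
              (t.1.1 + 2 * t.1.2.1 + 3 * t.1.2.2) :=
            isWeightedHomogeneous_monomial _ _ _ (weight_tf _)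
          have h2 := h1.mul hg
          rwa [hwt] at h2
        · rw [Submodule.restrictScalars_mem, Ideal.add_eq_sup]
          exact Submodule.mem_sup_right
            (Ideal.mem_span_singleton'.mpr ⟨monomial (tf t.1) 1, rfl⟩)
    · intro p hp
      rw [Submodule.mem_inf] at hp
      obtain ⟨hph, hpI⟩ := hp
      have hph' : IsWeightedHomogeneous (![1, 2, 3] : Fin 3 → ℕ) p w := hph
      rw [Submodule.restrictScalars_mem, Ideal.add_eq_sup, Submodule.mem_sup] at hpI
      obtain ⟨q, hq, r, hr, hpqr⟩ := hpI
      obtain ⟨s, hs⟩ := Ideal.mem_span_singleton'.mp hr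
      have hpeq : p = q + s * g := by rw [← hpqr, hs]
      have hcomp : p = weightedHomogeneousComponent (![1, 2, 3] : Fin 3 → ℕ) w q
          + weightedHomogeneousComponent (![1, 2, 3] : Fin 3 → ℕ) w (s * g) := by
        conv_lhs => rw [← hph'.weightedHomogeneousComponent_same, hpeq, map_add]
      have hq' : ∀ d ∈ (weightedHomogeneousComponent (![1, 2, 3] : Fin 3 → ℕ) w q).support,
          3 * m - 2 ≤ d 0 + d 1 := by
        intro d hd
        have hsub : coeff d (weightedHomogeneousComponent (![1, 2, 3] : Fin 3 → ℕ) w q) ≠ 0 :=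
          MvPolynomial.mem_support_iff.mp hd
        rw [coeff_weightedHomogeneousComponent] at hsub
        have hcq : coeff d q ≠ 0 := by
          by_cases hc : (Finsupp.weight (![1, 2, 3] : Fin 3 → ℕ)) d = w
          · rwa [if_pos hc] at hsub
          · rw [if_neg hc] at hsub; exact absurd rfl hsub
        have hq2 : q ∈ (Ideal.span (X '' ((({0, 1} : Finset (Fin 3)) : Set (Fin 3))) :
            Set (MvPolynomial (Fin 3) k))) ^ (3 * m - 2) := by rwa [hset] at hq
        have hmem := pow_span_le_degIdeal ({0, 1} : Finset (Fin 3)) (3 * m - 2) hq2 d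
          (MvPolynomial.mem_support_iff.mpr hcq)
        rwa [sum2] at hmem
      rw [hcomp]
      refine Submodule.add_mem _ ?_ ?_
      · exact spanDM _ (weightedHomogeneousComponent_isWeightedHomogeneous _ _) hq'
      · by_cases hw3 : w < 3 * m
        · rw [comp_low g s (3 * m) w hg hw3]
          exact Submodule.zero_mem _
        · have hw : w = (w - 3 * m) + 3 * m := by omega
          have hcm : weightedHomogeneousComponent (![1, 2, 3] : Fin 3 → ℕ) w (s * g)
              = (weightedHomogeneousComponent (![1, 2, 3] : Fin 3 → ℕ) (w - 3 * m) s) * g := by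
            conv_lhs => rw [hw]
            exact comp_mul g s (3 * m) (w - 3 * m) hg
          rw [hcm]
          set r' := weightedHomogeneousComponent (![1, 2, 3] : Fin 3 → ℕ) (w - 3 * m) s with hr'
          have hr'h : IsWeightedHomogeneous (![1, 2, 3] : Fin 3 → ℕ) r' (w - 3 * m) :=
            weightedHomogeneousComponent_isWeightedHomogeneous _ _
          have hsum : r' * g = ∑ d ∈ r'.support, monomial d (coeff d r') * g := by
            conv_lhs => rw [r'.as_sum]
            rw [Finset.sum_mul]
          rw [hsum]
          refine Submodule.sum_mem _ fun d hd => ?_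
          have hcd : coeff d r' ≠ 0 := MvPolynomial.mem_support_iff.mp hd
          have hwd : (Finsupp.weight (![1, 2, 3] : Fin 3 → ℕ)) d = w - 3 * m := hr'h hcd
          by_cases hcase : d 0 + d 1 < 3 * m - 2
          · have heq : monomial d (coeff d r') * g = coeff d r' • (monomial d 1 * g) := by
              rw [← smul_mul_assoc, MvPolynomial.smul_monomial, smul_eq_mul, mul_one]
            rw [heq]
            refine Submodule.smul_mem _ _ (Submodule.subset_span ?_)
            refine ⟨Sum.inr ⟨(d 0, d 1, d 2), ?_⟩, ?_⟩
            · simp only [DG, Finset.mem_filter, mem_base]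
              rw [weight_eval] at hwd
              omega
            · show monomial (tf (d 0, d 1, d 2)) 1 * g = monomial d 1 * g
              rw [tf_eta]
          · apply spanDM
            · have h1 : IsWeightedHomogeneous (![1, 2, 3] : Fin 3 → ℕ)
                  (monomial d (coeff d r') : MvPolynomial (Fin 3) k) (w - 3 * m) :=
                isWeightedHomogeneous_monomial _ _ _ hwd
              have h2 := h1.mul hg
              rwa [← hw] at h2
            · intro e he
              obtain ⟨e1, he1, f1, hf1, rfl⟩ :=
                Finset.mem_add.mp (MvPolynomial.support_mul _ _ he)
              rw [MvPolynomial.support_monomial, if_neg hcd, Finset.mem_singleton] at he1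
              subst he1
              simp only [Finsupp.add_apply]
              omega
  have b : Module.Basis (↥(DM m w) ⊕ ↥(DG m w)) k
      ↥(weightedHomogeneousSubmodule k (![1, 2, 3] : Fin 3 → ℕ) w ⊓
        Submodule.restrictScalars k
          (Ideal.span {X (0 : Fin 3), X 1} ^ (3 * m - 2) + Ideal.span {g})) :=
    (Module.Basis.span hind).map (LinearEquiv.ofEq _ _ hspan)
  rw [Module.finrank_eq_card_basis b, Fintype.card_sum, Fintype.card_coe, Fintype.card_coe]

end

end SHF

/-- If `g` is wt-homogeneous of weight `3m` with nonzero coefficient of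
`z^m`, then `k[x,y,z]/((x,y)^(3m-2)+(g))` and `k[x,y,z]/(x,y,z)^(3m-2)` have the same
wt-graded Hilbert function. -/
theorem same_hilbert_function (k : Type) [Field k] [CharZero k] (m : ℕ) (hm : 2 ≤ m)
    (g : MvPolynomial (Fin 3) k)
    (hg : MvPolynomial.IsWeightedHomogeneous (![1, 2, 3] : Fin 3 → ℕ) g (3 * m))
    (hz : MvPolynomial.coeff (Finsupp.single (2 : Fin 3) m) g ≠ 0) :
    ∀ w : ℕ,
      Module.finrank k
        ↥(MvPolynomial.weightedHomogeneousSubmodule k (![1, 2, 3] : Fin 3 → ℕ) w ⊓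
          Submodule.restrictScalars k
            (Ideal.span {MvPolynomial.X (0 : Fin 3), MvPolynomial.X 1} ^ (3 * m - 2) +
              Ideal.span {g})) =
      Module.finrank k
        ↥(MvPolynomial.weightedHomogeneousSubmodule k (![1, 2, 3] : Fin 3 → ℕ) w ⊓
          Submodule.restrictScalars k
            ((Ideal.span {MvPolynomial.X (0 : Fin 3), MvPolynomial.X 1, MvPolynomial.X 2} :
              Ideal (MvPolynomial (Fin 3) k)) ^ (3 * m - 2))) := by
  intro w
  rw [SHF.finrank_I m w hm g hg hz, SHF.finrank_J m w]
  exact (SHF.card_eq m w hm).symm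
end

section
/- Fix an integer m ≥ 2 and set ℓ = 3m−2. Let g ∈ k[x,y,z] be a wt-homogeneous polynomial of weight 3m in which the monomial z^m occurs with nonzero coefficient, and let I_g = (x,y)^ℓ + (g). Then every monomial x^i y^j z^k with 2i+2j+3k > 9(m−1) belongs to I_g. -/
open MvPolynomial Finsupp

private lemma fin3_decomp (d : Fin 3 →₀ ℕ) :
    d = single 0 (d 0) + single 1 (d 1) + single 2 (d 2) := by
  ext t; fin_cases t <;> simp [Finsupp.single_apply]

private lemma weight_fin3 (d : Fin 3 →₀ ℕ) :
    (weight (![1,2,3] : Fin 3 → ℕ)) d = d 0 * 1 + d 1 * 2 + d 2 * 3 := by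
  rw [weight_apply, Finsupp.sum_fintype]
  · simp [Fin.sum_univ_three]
  · intro i; simp

private lemma mem_xy_pow {k : Type} [Field k] (i j l n : ℕ) (h : n ≤ i + j) :
    (monomial (single (0 : Fin 3) i + single 1 j + single 2 l) (1 : k)) ∈
      Ideal.span {X (0 : Fin 3), X 1} ^ n := by
  have hx : (X (0:Fin 3) : MvPolynomial (Fin 3) k) ∈ Ideal.span {X (0:Fin 3), X 1} :=
    Ideal.subset_span (by simp)
  have hy : (X (1:Fin 3) : MvPolynomial (Fin 3) k) ∈ Ideal.span {X (0:Fin 3), X 1} :=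
    Ideal.subset_span (by simp)
  have hmem : (X (0:Fin 3) : MvPolynomial (Fin 3) k) ^ i * X 1 ^ j ∈
      Ideal.span {X (0:Fin 3), X 1} ^ (i + j) := by
    rw [pow_add]
    exact Ideal.mul_mem_mul (Ideal.pow_mem_pow hx i) (Ideal.pow_mem_pow hy j)
  have hle : (Ideal.span {X (0:Fin 3), X 1} : Ideal (MvPolynomial (Fin 3) k)) ^ (i+j) ≤
      Ideal.span {X (0:Fin 3), X 1} ^ n :=
    Ideal.pow_le_pow_right h
  have : (monomial (single (0 : Fin 3) i + single 1 j + single 2 l) (1 : k)) =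
      X 2 ^ l * (X 0 ^ i * X 1 ^ j) := by
    simp only [X_pow_eq_monomial, monomial_mul, one_mul]
    congr 1
    abel_nf
  rw [this]
  exact Ideal.mul_mem_left _ _ (hle hmem)

/-- With `ℓ = 3m-2` and `g` wt-homogeneous of weight `3m` with nonzero
coefficient of `z^m`, every monomial `x^i y^j z^k` with `2i+2j+3k > 9(m-1)` belongs to
`I_g = (x,y)^ℓ + (g)`. -/
theorem trimming (k : Type) [Field k] [CharZero k] (m : ℕ) (hm : 2 ≤ m)
    (g : MvPolynomial (Fin 3) k)
    (hg : MvPolynomial.IsWeightedHomogeneous (![1, 2, 3] : Fin 3 → ℕ) g (3 * m))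
    (hz : MvPolynomial.coeff (Finsupp.single (2 : Fin 3) m) g ≠ 0) :
    ∀ i j l : ℕ, 9 * (m - 1) < 2 * i + 2 * j + 3 * l →
      MvPolynomial.monomial
          (Finsupp.single (0 : Fin 3) i + Finsupp.single 1 j + Finsupp.single 2 l)
          (1 : k) ∈
        Ideal.span {MvPolynomial.X (0 : Fin 3), MvPolynomial.X 1} ^ (3 * m - 2) +
          Ideal.span {g} := by
  intro i j l
  induction l using Nat.strong_induction_on generalizing i j with
  | _ l IH =>
  intro hlt
  set J := Ideal.span {MvPolynomial.X (0 : Fin 3), MvPolynomial.X 1} ^ (3 * m - 2) +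
      Ideal.span {g} with hJ
  by_cases hij : 3 * m - 2 ≤ i + j
  · exact Ideal.mem_sup_left (mem_xy_pow i j l _ hij)
  · have hl : m ≤ l := by omega
    set c := MvPolynomial.coeff (Finsupp.single (2 : Fin 3) m) g with hc
    set h := g - monomial (Finsupp.single (2 : Fin 3) m) c with hh
    have hch : MvPolynomial.coeff (Finsupp.single (2 : Fin 3) m) h = 0 := by
      simp [hh, coeff_monomial, hc]
    have hwm : (weight (![1,2,3] : Fin 3 → ℕ)) (Finsupp.single (2 : Fin 3) m) = 3 * m := by
      rw [weight_fin3]; simp; ring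
    have hhom : IsWeightedHomogeneous (![1,2,3] : Fin 3 → ℕ) h (3 * m) := by
      rw [hh]
      have h1 : g ∈ weightedHomogeneousSubmodule k (![1,2,3] : Fin 3 → ℕ) (3*m) := hg
      have h2 : monomial (Finsupp.single (2 : Fin 3) m) c ∈
          weightedHomogeneousSubmodule k (![1,2,3] : Fin 3 → ℕ) (3*m) :=
        isWeightedHomogeneous_monomial _ _ _ hwm
      exact (weightedHomogeneousSubmodule k _ (3*m)).sub_mem h1 h2
    set s := Finsupp.single (0 : Fin 3) i + Finsupp.single 1 j + Finsupp.single 2 (l - m)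
      with hs
    -- each support monomial of h, multiplied by monomial s 1, is in J
    have hkey : (monomial s (1:k)) * h ∈ J := by
      rw [h.as_sum, Finset.mul_sum]
      apply Ideal.sum_mem
      intro d hd
      have hcd : MvPolynomial.coeff d h ≠ 0 := MvPolynomial.mem_support_iff.mp hd
      have hwd : d 0 * 1 + d 1 * 2 + d 2 * 3 = 3 * m := by
        rw [← weight_fin3]; exact hhom hcd
      have hdne : d ≠ Finsupp.single (2 : Fin 3) m := by
        intro he; rw [he] at hcd; exact hcd hch
      have hd2 : d 2 < m := by
        rcases Nat.lt_or_ge (d 2) m with h' | h'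
        · exact h'
        · exfalso
          have h0 : d 0 = 0 := by omega
          have h1 : d 1 = 0 := by omega
          have h2 : d 2 = m := by omega
          apply hdne
          rw [fin3_decomp d, h0, h1, h2]
          simp
      have hsd : s + d = Finsupp.single (0 : Fin 3) (i + d 0) + Finsupp.single 1 (j + d 1)
          + Finsupp.single 2 (l - m + d 2) := by
        ext t; fin_cases t <;> simp [hs, Finsupp.single_apply]
      have heq : monomial s (1:k) * monomial d (MvPolynomial.coeff d h) =
          MvPolynomial.C (MvPolynomial.coeff d h) *
            monomial (Finsupp.single (0 : Fin 3) (i + d 0) + Finsupp.single 1 (j + d 1)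
              + Finsupp.single 2 (l - m + d 2)) 1 := by
        rw [monomial_mul, C_mul_monomial, hsd, one_mul, mul_one]
      rw [heq]
      apply Ideal.mul_mem_left
      exact IH (l - m + d 2) (by omega) (i + d 0) (j + d 1) (by omega)
    have hgmem : (monomial s (1:k)) * g ∈ J :=
      Ideal.mem_sup_right (Ideal.mul_mem_left _ _ (Ideal.subset_span rfl))
    have hfinal : monomial
        (Finsupp.single (0 : Fin 3) i + Finsupp.single 1 j + Finsupp.single 2 l) (1:k) =
        MvPolynomial.C c⁻¹ * ((monomial s (1:k)) * g) -
          MvPolynomial.C c⁻¹ * ((monomial s (1:k)) * h) := by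
      rw [← mul_sub, ← mul_sub]
      have : g - h = monomial (Finsupp.single (2 : Fin 3) m) c := by rw [hh]; ring
      have hse : s + Finsupp.single (2 : Fin 3) m =
          Finsupp.single (0 : Fin 3) i + Finsupp.single 1 j + Finsupp.single 2 l := by
        ext t; fin_cases t <;> simp [hs, Finsupp.single_apply]
        omega
      rw [this, monomial_mul, C_mul_monomial, hse, one_mul, inv_mul_cancel₀ hz]
    rw [hfinal]
    exact J.sub_mem (Ideal.mul_mem_left _ _ hgmem) (Ideal.mul_mem_left _ _ hkey)
end

section
/- Fix an integer m ≥ 2 and let 𝓟_𝓡 = {(w,t,a) ∈ ℕ³ : w+a ≤ 6m−9 and w−a−6t−3ε(w+a) ≥ 0}. The map u_𝓡(w,t,a) = (a, −3t + (w−a−3ε(w+a))/2, 2t + ε(w+a)) is a bijection from 𝓟_𝓡 onto 𝓡', with inverse u ↦ (wt_𝓡(u), t_𝓡(u), a(u)), where a(u) denotes the first coordinate of u. -/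
open Finset

def uRmap (p : V) : V :=
  (p.2.2, -3 * p.2.1 + (p.1 - p.2.2 - 3 * epsZ (p.1 + p.2.2)) / 2,
    2 * p.2.1 + epsZ (p.1 + p.2.2))

def PRset (m : ℤ) : Set V :=
  {p | nonnegV p ∧ p.1 + p.2.2 ≤ 6 * m - 9 ∧
    0 ≤ p.1 - p.2.2 - 6 * p.2.1 - 3 * epsZ (p.1 + p.2.2)}

/-- **Proposition `rprimeparamwta`.** `u_𝓡` is a bijection `𝓟_𝓡 → 𝓡'`
with inverse `u ↦ (wt_𝓡(u), t_𝓡(u), a(u))`. -/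
theorem uR_parametrization (m : ℤ) (hm : 2 ≤ m) :
    Set.BijOn uRmap (PRset m) (Rprime m) ∧
    Set.InvOn (fun u : V => ((wtR u, tR u, u.1) : V)) uRmap (PRset m) (Rprime m) := by
  have hinv : Set.InvOn (fun u : V => ((wtR u, tR u, u.1) : V)) uRmap (PRset m) (Rprime m) := by
    constructor
    · rintro ⟨w, t, a⟩ ⟨⟨h1, h2, h3⟩, h4, h5⟩
      simp only [uRmap, wtR, tR, epsZ, nonnegV] at *
      refine Prod.ext ?_ (Prod.ext ?_ ?_) <;> simp <;> omega
    · rintro ⟨a, b, c⟩ ⟨⟨h1, h2, h3⟩, h4⟩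
      simp only [uRmap, wtR, tR, epsZ, nonnegV, Rprime, Set.mem_setOf_eq] at *
      refine Prod.ext ?_ (Prod.ext ?_ ?_) <;> simp <;> omega
  have hmt1 : Set.MapsTo uRmap (PRset m) (Rprime m) := by
    rintro ⟨w, t, a⟩ ⟨⟨h1, h2, h3⟩, h4, h5⟩
    simp only [uRmap, epsZ, nonnegV, Rprime, Set.mem_setOf_eq] at *
    omega
  have hmt2 : Set.MapsTo (fun u : V => ((wtR u, tR u, u.1) : V)) (Rprime m) (PRset m) := by
    rintro ⟨a, b, c⟩ ⟨⟨h1, h2, h3⟩, h4⟩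
    simp only [uRmap, wtR, tR, epsZ, nonnegV, PRset, Set.mem_setOf_eq] at *
    have hp : (a + 2 * b + 3 * c + a) % 2 = c % 2 := by omega
    simp only [hp]
    omega
  exact ⟨hinv.bijOn hmt1 hmt2, hinv⟩
end

section
/- Fix an integer m ≥ 2 and let 𝓟_𝓜 = {(w,t,i) ∈ ℕ³ : w+i ≤ 6m−9 and 3(m−1+t) − w + η(w+i) ≤ i ≤ 3(m−1−t) − η(w+i)}. The map v_𝓜(w,t,i) = (i, −3t + 3(m−1) − i − η(w+i), 2t − (m−2) + (w+i+2η(w+i))/3) is a bijection from 𝓟_𝓜 onto 𝓜', with inverse v ↦ (wt_𝓜(v), t_𝓜(v), i(v)), where i(v) denotes the first coordinate of v. -/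
open Finset

def vMmap (m : ℤ) (p : V) : V :=
  (p.2.2, -3 * p.2.1 + 3 * (m - 1) - p.2.2 - etaZ (p.1 + p.2.2),
    2 * p.2.1 - (m - 2) + (p.1 + p.2.2 + 2 * etaZ (p.1 + p.2.2)) / 3)

def PMset (m : ℤ) : Set V :=
  {p | nonnegV p ∧ p.1 + p.2.2 ≤ 6 * m - 9 ∧
    3 * (m - 1 + p.2.1) - p.1 + etaZ (p.1 + p.2.2) ≤ p.2.2 ∧
    p.2.2 ≤ 3 * (m - 1 - p.2.1) - etaZ (p.1 + p.2.2)}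

lemma vM_mapsTo (m : ℤ) (hm : 2 ≤ m) :
    Set.MapsTo (vMmap m) (PMset m) (Mprime m) := by
  rintro ⟨w, t, i⟩ hp
  obtain ⟨⟨h1, h2, h3⟩, h4, h5, h6⟩ := hp
  simp only [vMmap, Mprime, nonnegV, etaZ, Set.mem_setOf_eq] at *
  have h0 : 0 ≤ (w + i) % 3 ∧ (w + i) % 3 < 3 ∧ (3:ℤ) ∣ (w + i - (w + i) % 3) := by omega
  generalize hr : (w + i) % 3 = r at *
  refine ⟨⟨?_, ?_, ?_⟩, ?_, ?_, ?_⟩ <;> omega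

lemma vM_inv_mapsTo (m : ℤ) (hm : 2 ≤ m) :
    Set.MapsTo (fun v : V => ((wtM m v, tM m v, v.1) : V)) (Mprime m) (PMset m) := by
  rintro ⟨i, j, k⟩ hv
  obtain ⟨⟨h1, h2, h3⟩, h4, h5, h6⟩ := hv
  simp only [wtM, tM, PMset, nonnegV, etaZ, Set.mem_setOf_eq] at *
  have key : (3 * (m - 1) - i - j) % 3 = ((i + 2 * j + 3 * k - 3 * m) + i) % 3 := by omega
  refine ⟨⟨?_, ?_, ?_⟩, ?_, ?_, ?_⟩ <;> omega

lemma vM_leftInv (m : ℤ) (hm : 2 ≤ m) :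
    Set.LeftInvOn (fun v : V => ((wtM m v, tM m v, v.1) : V)) (vMmap m) (PMset m) := by
  rintro ⟨w, t, i⟩ hp
  obtain ⟨⟨h1, h2, h3⟩, h4, h5, h6⟩ := hp
  simp only [vMmap, wtM, tM, etaZ, Prod.mk.injEq] at *
  have h0 : 0 ≤ (w + i) % 3 ∧ (w + i) % 3 < 3 ∧ (3:ℤ) ∣ (w + i - (w + i) % 3) := by omega
  generalize hr : (w + i) % 3 = r at *
  refine ⟨?_, ?_, ?_⟩ <;> first | trivial | omega

lemma vM_rightInv (m : ℤ) (hm : 2 ≤ m) :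
    Set.RightInvOn (fun v : V => ((wtM m v, tM m v, v.1) : V)) (vMmap m) (Mprime m) := by
  rintro ⟨i, j, k⟩ hv
  obtain ⟨⟨h1, h2, h3⟩, h4, h5, h6⟩ := hv
  simp only [vMmap, wtM, tM, etaZ, Prod.mk.injEq] at *
  have key : (3 * (m - 1) - i - j) % 3 = ((i + 2 * j + 3 * k - 3 * m) + i) % 3 := by omega
  refine ⟨?_, ?_, ?_⟩ <;> first | trivial | omega

/-- **Proposition `mprimeparamwta`.** `v_𝓜` is a bijection `𝓟_𝓜 → 𝓜'`
with inverse `v ↦ (wt_𝓜(v), t_𝓜(v), i(v))`. -/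
theorem vM_parametrization (m : ℤ) (hm : 2 ≤ m) :
    Set.BijOn (vMmap m) (PMset m) (Mprime m) ∧
    Set.InvOn (fun v : V => ((wtM m v, tM m v, v.1) : V)) (vMmap m) (PMset m) (Mprime m) := by
  have hinv : Set.InvOn (fun v : V => ((wtM m v, tM m v, v.1) : V)) (vMmap m)
      (PMset m) (Mprime m) := ⟨vM_leftInv m hm, vM_rightInv m hm⟩
  exact ⟨hinv.bijOn (vM_mapsTo m hm) (vM_inv_mapsTo m hm), hinv⟩
end

section
/- Fix an integer m ≥ 2. The map φ^▭ defined by φ^▭(u) = u + q_{λ(u)} is a bijection from 𝓡^▭ onto 𝓜^▭; it satisfies Divisibility (φ^▭(u) − u has non-negative entries for every u ∈ 𝓡^▭), and it preserves both the weight and the t-invariant: wt_𝓜(φ^▭(u)) = wt_𝓡(u) and t_𝓜(φ^▭(u)) = t_𝓡(u) for every u ∈ 𝓡^▭. -/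
open Finset

lemma lam_facts (n : ℤ) : 6 * lamZ n = n - rhoZ n ∧ -6 ≤ rhoZ n ∧ rhoZ n ≤ 1 ∧
    rhoZ n ≠ 0 ∧ rhoZ n ≠ -5 := by
  unfold lamZ rhoZ
  split_ifs <;> omega

/-- **Theorem `phirectregion`.** `φ^▭(u) = u + q_{λ(u)}` is a bijection
`𝓡^▭ → 𝓜^▭` satisfying Divisibility and preserving weight and t-invariant. -/
theorem phiRect_bijection (m : ℤ) (hm : 2 ≤ m) :
    Set.BijOn (phiRect m) (Rrect m) (Mrect m) ∧
    ∀ u ∈ Rrect m,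
      nonnegV (phiRect m u - u) ∧ wtM m (phiRect m u) = wtR u ∧
      tM m (phiRect m u) = tR u := by
  have key : ∀ u ∈ Rrect m, phiRect m u ∈ Mrect m ∧ nonnegV (phiRect m u - u) ∧
      wtM m (phiRect m u) = wtR u ∧ tM m (phiRect m u) = tR u := by
    rintro ⟨a, b, c⟩ hu
    have hf := lam_facts (deltaW m (wtR (a, b, c)) - (a, b, c).1)
    simp only [Rrect, Rprime, Set.mem_setOf_eq, nonnegV, wtR, tR, tauW] at hu
    simp only [wtR, deltaW] at hf
    simp only [Mrect, Mprime, Set.mem_setOf_eq, nonnegV, wtM, wtR, tR, tM, tauW, phiRect,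
      deltaW, qvec, Prod.mk_add_mk, Prod.mk_sub_mk, Prod.fst, Prod.snd]
    obtain ⟨h1, h2, h3, h4, h5⟩ := hf
    generalize hR : rhoZ (6 * m - 9 - (a + 2 * b + 3 * c) - a) = R at h1 h2 h3 h4 h5
    interval_cases R <;> omega
  refine ⟨⟨fun u hu => (key u hu).1, ?_, ?_⟩, fun u hu => (key u hu).2⟩
  · rintro ⟨a, b, c⟩ hu ⟨a', b', c'⟩ hu' heq
    have ha : a = a' := by
      simpa [phiRect, qvec] using congrArg Prod.fst heq
    have hw : wtR (a, b, c) = wtR (a', b', c') := by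
      rw [← (key _ hu).2.2.1, ← (key _ hu').2.2.1, heq]
    have hE : deltaW m (wtR ((a : ℤ), b, c)) - ((a : ℤ), b, c).1
        = deltaW m (wtR ((a' : ℤ), b', c')) - ((a' : ℤ), b', c').1 := by
      rw [hw, ha]
    simp only [phiRect] at heq
    rw [hE] at heq
    exact add_right_cancel heq
  · rintro ⟨i, j, k⟩ hv
    refine ⟨(i, j - 3 * lamZ (deltaW m (wtM m (i, j, k)) - i),
      k - (m - 2 * lamZ (deltaW m (wtM m (i, j, k)) - i))), ?_, ?_⟩
    · have hf := lam_facts (deltaW m (wtM m (i, j, k)) - i)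
      simp only [wtM, deltaW] at hf
      simp only [Mrect, Mprime, Set.mem_setOf_eq, nonnegV, wtM, tM, tauW] at hv
      simp only [Rrect, Rprime, Set.mem_setOf_eq, nonnegV, wtR, tR, tauW, wtM, deltaW,
        Prod.fst, Prod.snd]
      obtain ⟨h1, h2, h3, h4, h5⟩ := hf
      generalize hR : rhoZ (6 * m - 9 - (i + 2 * j + 3 * k - 3 * m) - i) = R at h1 h2 h3 h4 h5
      interval_cases R <;> omega
    · have harg : deltaW m (wtR (i, j - 3 * lamZ (deltaW m (wtM m (i, j, k)) - i),
          k - (m - 2 * lamZ (deltaW m (wtM m (i, j, k)) - i))))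
            - (i, j - 3 * lamZ (deltaW m (wtM m (i, j, k)) - i),
          k - (m - 2 * lamZ (deltaW m (wtM m (i, j, k)) - i))).1
          = deltaW m (wtM m (i, j, k)) - i := by
        simp only [wtR, wtM, deltaW, Prod.fst, Prod.snd]
        ring
      simp only [phiRect]
      rw [harg]
      simp only [qvec, Prod.mk_add_mk, Prod.mk.injEq]
      refine ⟨by ring, by ring, by ring⟩
end

section
/- Fix an integer m ≥ 2, an integer w with 3(m−1) ≤ w ≤ 6m−9, and an integer r with 0 ≤ r ≤ ⌊δ_w/2⌋. Let u^(r) = (δ_w−2r, r+η(w), 2τ_w+1). Then u^(r) ∈ 𝓡^▭_w; λ(u^(r)) = ⌊(r+3)/3⌋; ρ(u^(r)) is even and congruent to 2r modulo 6; and every u ∈ 𝓡^▭_w with u^(r) ≺ u has second coordinate b(u) ≥ r+η(w)+1. -/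
open Finset

lemma lamZ_spec (n : ℤ) : 6 * lamZ n = n - rhoZ n ∧ -6 ≤ rhoZ n ∧ rhoZ n ≤ 1 := by
  unfold lamZ rhoZ; split <;> omega

/-- **Lemma `urrectangular`.** Properties of `u^(r) = (δ_w-2r, r+η(w), 2τ_w+1)`. -/
theorem ur_properties (m w r : ℤ) (hm : 2 ≤ m) (hw1 : 3 * (m - 1) ≤ w) (hw2 : w ≤ 6 * m - 9)
    (hr0 : 0 ≤ r) (hr1 : r ≤ deltaW m w / 2)
    (ur : V) (hur : ur = (deltaW m w - 2 * r, r + etaZ w, 2 * tauW m w + 1)) :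
    ur ∈ Rrect m ∧ wtR ur = w ∧
    lamZ (deltaW m w - ur.1) = (r + 3) / 3 ∧
    rhoZ (deltaW m w - ur.1) % 2 = 0 ∧
    rhoZ (deltaW m w - ur.1) % 6 = (2 * r) % 6 ∧
    ∀ u ∈ Rrect m, wtR u = w → precR m w ur u → r + etaZ w + 1 ≤ u.2.1 := by
  subst hur
  simp only [deltaW] at hr1
  have hkey : ∀ n : ℤ, n = 2 * r → lamZ n = r / 3 + 1 ∧ rhoZ n = 2 * (r % 3) - 6 := by
    intro n hn; unfold lamZ rhoZ; split <;> omega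
  obtain ⟨hk1, hk2⟩ := hkey (2 * r) rfl
  have harg : deltaW m w - ((deltaW m w - 2 * r, r + etaZ w, 2 * tauW m w + 1) : V).1
      = 2 * r := by
    show deltaW m w - (deltaW m w - 2 * r) = 2 * r; ring
  refine ⟨?_, ?_, ?_, ?_, ?_, ?_⟩
  · simp only [Rrect, Rprime, Set.mem_setOf_eq, nonnegV, wtR, tR, tauW, deltaW, etaZ]
    omega
  · simp only [wtR, deltaW, etaZ, tauW]; omega
  · rw [harg, hk1]; omega
  · rw [harg, hk2]; omega
  · rw [harg, hk2]; omega
  · rintro ⟨a, b, c⟩ hu hw hprec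
    simp only [wtR] at hw
    simp only [Rrect, Rprime, Set.mem_setOf_eq, nonnegV, wtR, tR] at hu
    rw [hw] at hu
    simp only [precR, lamU, tR] at hprec
    rw [show deltaW m w - (deltaW m w - 2 * r) = 2 * r by ring, hk1] at hprec
    have hl := lamZ_spec (deltaW m w - a)
    simp only [deltaW, etaZ, tauW] at hu hprec hl ⊢
    omega
end

section
/- Fix an integer m ≥ 2 and an integer w with 3(m−1) ≤ w ≤ 6m−9. Let u ∈ 𝓡^▭_w and let n₁ < n₂ be integers. If both u+q_{n₁} and u+q_{n₂} belong to 𝓜^▭_w, then u+q_{n₂} ≺ u+q_{n₁} in the order on 𝓜^▭_w. -/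
open Finset

/-- **Lemma `lemmaunirectangle`.** If `u + q_{n₁}` and `u + q_{n₂}` both lie in
`𝓜^▭_w` and `n₁ < n₂`, then `u + q_{n₂} ≺ u + q_{n₁}`. -/
theorem q_order_reversal (m w : ℤ) (hm : 2 ≤ m) (hw1 : 3 * (m - 1) ≤ w) (hw2 : w ≤ 6 * m - 9)
    (u : V) (hu : u ∈ Rrect m) (huw : wtR u = w)
    (n1 n2 : ℤ) (hn : n1 < n2)
    (h1 : u + qvec m n1 ∈ Mrect m) (h2 : u + qvec m n2 ∈ Mrect m) :
    precM m w (u + qvec m n2) (u + qvec m n1) := by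
  right; right
  refine ⟨rfl, rfl, ?_⟩
  simp only [tM, qvec, Prod.fst_add, Prod.snd_add, Prod.mk.injEq]
  omega
end

section
/- Fix an integer m ≥ 2 and an integer w with 3(m−1) ≤ w ≤ 6m−9. If φ̂ : 𝓡^▭_w → 𝓜^▭_w is a bijection whose multiset of multipliers equals the multiset of multipliers of φ^▭ restricted to 𝓡^▭_w, then φ̂ coincides with φ^▭ on 𝓡^▭_w. -/
open Finset

section Aux

private lemma lam_rho (n : ℤ) :
    n = 6 * lamZ n + rhoZ n ∧ -6 ≤ rhoZ n ∧ rhoZ n ≤ 1 ∧ rhoZ n ≠ 0 ∧ rhoZ n ≠ -5 := by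
  unfold lamZ rhoZ
  split_ifs with h <;> omega

private lemma mem_RrectWF_iff (m w : ℤ) (u : V) :
    u ∈ RrectWF m w ↔
      0 ≤ u.1 ∧ u.1 ≤ w ∧ 0 ≤ u.2.1 ∧ u.2.1 ≤ w ∧ 0 ≤ u.2.2 ∧ u.2.2 ≤ w ∧
        2 * u.1 + 2 * u.2.1 + 3 * u.2.2 ≤ 6 * m - 9 ∧
        u.1 + 2 * u.2.1 + 3 * u.2.2 = w ∧ u.2.2 / 2 ≤ w / 3 - (m - 1) := by
  simp only [RrectWF, RprimeWF, boxF, Finset.mem_filter, Finset.mem_product, Finset.mem_Icc]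
  simp only [RrectWF, RprimeWF, boxF, Finset.mem_filter, Finset.mem_product, Finset.mem_Icc,
    wtR, tR, tauW]
  tauto

private lemma mem_MrectWF_iff (m w : ℤ) (v : V) :
    v ∈ MrectWF m w ↔
      0 ≤ v.1 ∧ v.1 ≤ w + 3 * m ∧ 0 ≤ v.2.1 ∧ v.2.1 ≤ w + 3 * m ∧ 0 ≤ v.2.2 ∧
        v.2.2 ≤ w + 3 * m ∧
        2 * v.1 + 2 * v.2.1 + 3 * v.2.2 ≤ 9 * (m - 1) ∧ v.1 + v.2.1 ≤ 3 * (m - 1) ∧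
        3 * m - 2 ≤ v.1 + v.2.1 + v.2.2 ∧ v.1 + 2 * v.2.1 + 3 * v.2.2 - 3 * m = w ∧
        (3 * (m - 1) - v.1 - v.2.1) / 3 ≤ w / 3 - (m - 1) := by
  simp only [MrectWF, MprimeWF, boxF, Finset.mem_filter, Finset.mem_product, Finset.mem_Icc]
  simp only [MrectWF, MprimeWF, boxF, Finset.mem_filter, Finset.mem_product, Finset.mem_Icc,
    wtM, tM, tauW]
  tauto

private lemma phiRect_eq (m w : ℤ) (u : V) (hw : wtR u = w) :
    phiRect m u = (u.1, u.2.1 + 3 * lamZ (deltaW m w - u.1),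
      u.2.2 + (m - 2 * lamZ (deltaW m w - u.1))) := by
  simp [phiRect, hw, qvec, Prod.ext_iff]

private lemma phiRect_mapsTo (m w : ℤ) (hm : 2 ≤ m) (hw1 : 3 * (m - 1) ≤ w)
    (hw2 : w ≤ 6 * m - 9) (u : V) (hu : u ∈ RrectWF m w) :
    phiRect m u ∈ MrectWF m w := by
  rw [mem_RrectWF_iff] at hu
  have hw' : wtR u = w := by simp only [wtR]; exact hu.2.2.2.2.2.2.2.1
  rw [phiRect_eq m w u hw', mem_MrectWF_iff]
  set l := lamZ (deltaW m w - u.1) with hl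
  obtain ⟨h1, h2, h3, h4, h5⟩ := lam_rho (deltaW m w - u.1)
  rw [← hl] at h1
  have hd : deltaW m w = 6 * m - 9 - w := rfl
  simp only [Prod.fst, Prod.snd]
  omega

private lemma phiRect_surjOn (m w : ℤ) (hm : 2 ≤ m) (hw1 : 3 * (m - 1) ≤ w)
    (hw2 : w ≤ 6 * m - 9) (v : V) (hv : v ∈ MrectWF m w) :
    ∃ u ∈ RrectWF m w, phiRect m u = v := by
  rw [mem_MrectWF_iff] at hv
  set l := lamZ (deltaW m w - v.1) with hl
  obtain ⟨h1, h2, h3, h4, h5⟩ := lam_rho (deltaW m w - v.1)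
  rw [← hl] at h1
  have hr : rhoZ (deltaW m w - v.1) = -6 ∨ rhoZ (deltaW m w - v.1) = -4 ∨
      rhoZ (deltaW m w - v.1) = -3 ∨ rhoZ (deltaW m w - v.1) = -2 ∨
      rhoZ (deltaW m w - v.1) = -1 ∨ rhoZ (deltaW m w - v.1) = 1 := by omega
  have hd : deltaW m w = 6 * m - 9 - w := rfl
  refine ⟨(v.1, v.2.1 - 3 * l, v.2.2 - (m - 2 * l)), ?_, ?_⟩
  · rw [mem_RrectWF_iff]
    simp only [Prod.fst, Prod.snd]
    rcases hr with h | h | h | h | h | h <;> omega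
  · have hw' : wtR (v.1, v.2.1 - 3 * l, v.2.2 - (m - 2 * l)) = w := by
      simp only [wtR, Prod.fst, Prod.snd]
      omega
    rw [phiRect_eq m w _ hw']
    simp only [Prod.ext_iff, Prod.fst, Prod.snd, ← hl]
    exact ⟨trivial, by ring, by ring⟩

end Aux

/-- **Statement 10 (Corollary `unirectangle2`): uniqueness of `φ^▭`.** Any bijection
`𝓡^▭_w → 𝓜^▭_w` with the same multiset of multipliers as `φ^▭` equals `φ^▭`. -/
theorem phiRect_uniqueness (m w : ℤ) (hm : 2 ≤ m) (hw1 : 3 * (m - 1) ≤ w)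
    (hw2 : w ≤ 6 * m - 9) (φh : V → V)
    (hbij : Set.BijOn φh (RrectWF m w : Set V) (MrectWF m w : Set V))
    (hmult : (RrectWF m w).val.map (fun u => φh u - u) =
      (RrectWF m w).val.map (fun u => phiRect m u - u)) :
    ∀ u ∈ RrectWF m w, φh u = phiRect m u := by
  classical
  set R := RrectWF m w with hR
  set M := MrectWF m w with hM
  set lamw : V → ℤ := fun u => lamZ (deltaW m w - u.1) with hlamw
  -- every multiplier of φh has the form qvec m h
  have hform : ∀ u ∈ R, ∃ h : ℤ, φh u = u + qvec m h := by
    intro u hu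
    have hmem : (φh u - u) ∈ R.val.map (fun u => phiRect m u - u) := by
      rw [← hmult]
      exact Multiset.mem_map_of_mem _ hu
    rw [Multiset.mem_map] at hmem
    obtain ⟨u', hu', heq⟩ := hmem
    have hu'R : u' ∈ R := Finset.mem_def.mpr hu'
    have hw' : wtR u' = w := by
      have := ((mem_RrectWF_iff m w u').mp hu'R).2.2.2.2.2.2.2.1
      simpa [wtR] using this
    refine ⟨lamZ (deltaW m w - u'.1), ?_⟩
    have hq : phiRect m u' - u' = qvec m (lamZ (deltaW m w - u'.1)) := by
      simp only [phiRect, hw']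
      exact add_sub_cancel_left _ _
    rw [hq] at heq
    have h3 : φh u = (φh u - u) + u := by abel
    rw [h3, heq]
    abel
  -- φh preserves first coordinate
  have hfst : ∀ u ∈ R, (φh u).1 = u.1 := by
    intro u hu
    obtain ⟨h, hh⟩ := hform u hu
    rw [hh]; simp [qvec]
  -- phiRect basic facts
  have hRmem : ∀ u ∈ R, phiRect m u = (u.1, u.2.1 + 3 * lamw u, u.2.2 + (m - 2 * lamw u)) := by
    intro u hu
    refine phiRect_eq m w u ?_
    have := ((mem_RrectWF_iff m w u).mp hu).2.2.2.2.2.2.2.1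
    simpa [wtR] using this
  have hRq : ∀ u ∈ R, phiRect m u = u + qvec m (lamw u) := by
    intro u hu
    have hw' : wtR u = w := by
      have := ((mem_RrectWF_iff m w u).mp hu).2.2.2.2.2.2.2.1
      simpa [wtR] using this
    simp only [phiRect, hw']
    rfl
  have hphiMaps : ∀ u ∈ R, phiRect m u ∈ M := fun u hu => phiRect_mapsTo m w hm hw1 hw2 u hu
  have hphiInj : ∀ u ∈ R, ∀ u' ∈ R, phiRect m u = phiRect m u' → u = u' := by
    intro u hu u' hu' he
    have e1 : u.1 = u'.1 := by
      have h := congrArg Prod.fst he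
      rw [hRmem u hu, hRmem u' hu'] at h
      exact h
    have hll : lamw u = lamw u' := by simp only [hlamw]; rw [e1]
    rw [hRq u hu, hRq u' hu', hll] at he
    exact add_right_cancel he
  have hphiSurj : ∀ v ∈ M, ∃ u ∈ R, phiRect m u = v :=
    fun v hv => phiRect_surjOn m w hm hw1 hw2 v hv
  -- reindexing sums over M via the two bijections
  set F : V → ℤ := fun v => lamZ (deltaW m w - v.1) * v.2.1 with hF
  have hA : ∑ u ∈ R, lamw u * (φh u).2.1 = ∑ v ∈ M, F v := by
    refine Finset.sum_bij (fun u _ => φh u) (fun u hu => ?_) ?_ ?_ ?_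
    · exact Finset.mem_coe.mp (hbij.mapsTo (Finset.mem_coe.mpr hu))
    · intro u hu u' hu' he
      exact hbij.injOn (Finset.mem_coe.mpr hu) (Finset.mem_coe.mpr hu') he
    · intro v hv
      obtain ⟨u, hu, he⟩ := hbij.surjOn (Finset.mem_coe.mpr hv)
      exact ⟨u, Finset.mem_coe.mp hu, he⟩
    · intro u hu
      simp only [hF, hlamw, hfst u hu]
  have hB : ∑ u ∈ R, lamw u * (phiRect m u).2.1 = ∑ v ∈ M, F v := by
    refine Finset.sum_bij (fun u _ => phiRect m u) (fun u hu => hphiMaps u hu) ?_ ?_ ?_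
    · intro u hu u' hu' he
      exact hphiInj u hu u' hu' he
    · intro v hv
      obtain ⟨u, hu, he⟩ := hphiSurj v hv
      exact ⟨u, hu, he⟩
    · intro u hu
      have h : (phiRect m u).1 = u.1 := by rw [hRq u hu]; simp [qvec]
      simp only [hF, hlamw, h]
  -- sum of squares of (second coordinate of) multipliers
  have hsq : ∑ u ∈ R, ((φh u).2.1 - u.2.1) ^ 2 = ∑ u ∈ R, ((phiRect m u).2.1 - u.2.1) ^ 2 := by
    have h1 := congrArg (fun s => (Multiset.map (fun d : V => d.2.1 ^ 2) s).sum) hmult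
    simp only [Multiset.map_map, Function.comp] at h1
    rw [Finset.sum_map_val R (fun x => (φh x - x).2.1 ^ 2),
      Finset.sum_map_val R (fun x => (phiRect m x - x).2.1 ^ 2)] at h1
    calc ∑ u ∈ R, ((φh u).2.1 - u.2.1) ^ 2
        = ∑ u ∈ R, ((φh u - u).2.1) ^ 2 :=
          Finset.sum_congr rfl fun u _ => by simp [Prod.snd_sub, Prod.fst_sub]
      _ = ∑ u ∈ R, ((phiRect m u - u).2.1) ^ 2 := h1
      _ = ∑ u ∈ R, ((phiRect m u).2.1 - u.2.1) ^ 2 :=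
          Finset.sum_congr rfl fun u _ => by simp [Prod.snd_sub, Prod.fst_sub]
  -- the quadratic identity: sum of squared deviations vanishes
  have hdev : ∑ u ∈ R, ((φh u).2.1 - u.2.1 - 3 * lamw u) ^ 2 = 0 := by
    have expand : ∀ f : V → V, ∑ u ∈ R, ((f u).2.1 - u.2.1 - 3 * lamw u) ^ 2 =
        ∑ u ∈ R, ((f u).2.1 - u.2.1) ^ 2 - 6 * ∑ u ∈ R, lamw u * ((f u).2.1 - u.2.1)
          + 9 * ∑ u ∈ R, lamw u ^ 2 := by
      intro f
      rw [Finset.mul_sum, Finset.mul_sum, ← Finset.sum_sub_distrib, ← Finset.sum_add_distrib]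
      exact Finset.sum_congr rfl fun u _ => by ring
    have hS1 : ∑ u ∈ R, lamw u * ((φh u).2.1 - u.2.1)
        = ∑ u ∈ R, lamw u * ((phiRect m u).2.1 - u.2.1) := by
      simp only [mul_sub, Finset.sum_sub_distrib, hA, hB]
    have hzero : ∑ u ∈ R, ((phiRect m u).2.1 - u.2.1 - 3 * lamw u) ^ 2 = 0 := by
      refine Finset.sum_eq_zero fun u hu => ?_
      rw [hRmem u hu]
      show ((u.2.1 + 3 * lamw u) - u.2.1 - 3 * lamw u) ^ 2 = 0
      ring
    rw [expand φh, hS1, hsq, ← expand (phiRect m), hzero]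
  -- conclude pointwise
  intro u hu
  have hnn : ∀ u ∈ R, 0 ≤ ((φh u).2.1 - u.2.1 - 3 * lamw u) ^ 2 := fun u _ => sq_nonneg _
  have hz := (Finset.sum_eq_zero_iff_of_nonneg hnn).mp hdev u hu
  have hz' : (φh u).2.1 - u.2.1 - 3 * lamw u = 0 := by
    have := sq_eq_zero_iff.mp hz
    exact this
  obtain ⟨h, hh⟩ := hform u hu
  have h2 : (φh u).2.1 = u.2.1 + 3 * h := by rw [hh]; simp [qvec]
  have hhl : h = lamw u := by omega
  rw [hh, hhl, hRq u hu]
end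

section
/- Fix an integer m ≥ 2. The maps u^△ : 𝓓^T → 𝓡^T and v^△ : 𝓓^T → 𝓜^T are well-defined bijections. Moreover, the composition φ^△ = v^△∘(u^△)⁻¹ : 𝓡^T → 𝓜^T satisfies Divisibility (φ^△(u) − u has non-negative entries for every u ∈ 𝓡^T) and preserves weights and t-invariants: wt_𝓜(φ^△(u)) = wt_𝓡(u) and t_𝓜(φ^△(u)) = t_𝓡(u) for every u ∈ 𝓡^T. -/
open Finset

/-- **Theorem `phitriregion`.** `u^△` and `v^△` are bijections from `𝓓^T`
onto `𝓡^T` and `𝓜^T` respectively, and the induced bijection `φ^△ = v^△ ∘ (u^△)⁻¹`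
satisfies Divisibility and preserves weights and t-invariants. -/
theorem phiTri_bijection (m : ℤ) (hm : 2 ≤ m) :
    Set.BijOn uTri (DText m) (RText m) ∧
    Set.BijOn (vTri m) (DText m) (MText m) ∧
    ∀ d ∈ DText m,
      nonnegV (vTri m d - uTri d) ∧ wtM m (vTri m d) = wtR (uTri d) ∧
      tM m (vTri m d) = tR (uTri d) := by
  have hu_maps : Set.MapsTo uTri (DText m) (RText m) := by
    rintro ⟨w, r, s⟩ hd
    simp only [DText, Dall, nonnegV, Set.mem_setOf_eq, tD, tauW] at hd
    simp only [RText, uTri, etaZ, nonnegV, Set.mem_setOf_eq, tauW, wtR, tR]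
    refine ⟨⟨?_, ?_, ?_⟩, ?_⟩ <;> omega
  have hv_maps : Set.MapsTo (vTri m) (DText m) (MText m) := by
    rintro ⟨w, r, s⟩ hd
    simp only [DText, Dall, nonnegV, Set.mem_setOf_eq, tD, tauW] at hd
    simp only [MText, Mfull, vTri, epsZ, nonnegV, Set.mem_setOf_eq, tauW, wtM, tM]
    refine ⟨⟨⟨?_, ?_, ?_⟩, ?_, ?_⟩, ?_⟩ <;> omega
  have hu_inj : Set.InjOn uTri (DText m) := by
    rintro ⟨w, r, s⟩ hd ⟨w', r', s'⟩ hd' h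
    simp only [uTri, etaZ, Prod.mk.injEq] at h
    have : w = w' ∧ r = r' ∧ s = s' := by omega
    simp [Prod.ext_iff, this.1, this.2.1, this.2.2]
  have hv_inj : Set.InjOn (vTri m) (DText m) := by
    rintro ⟨w, r, s⟩ hd ⟨w', r', s'⟩ hd' h
    simp only [vTri, epsZ, Prod.mk.injEq] at h
    have : w = w' ∧ r = r' ∧ s = s' := by omega
    simp [Prod.ext_iff, this.1, this.2.1, this.2.2]
  have hu_surj : Set.SurjOn uTri (DText m) (RText m) := by
    rintro ⟨a, b, c⟩ hu
    simp only [RText, nonnegV, Set.mem_setOf_eq, tauW, wtR, tR] at hu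
    refine ⟨(a + 2 * b + 3 * c, b, a / 3), ?_, ?_⟩
    · simp only [DText, Dall, nonnegV, Set.mem_setOf_eq, tD, tauW]
      refine ⟨⟨⟨?_, ?_, ?_⟩, ?_⟩, ?_⟩ <;> omega
    · simp only [uTri, etaZ, Prod.mk.injEq]
      exact ⟨by omega, trivial, by omega⟩
  have hv_surj : Set.SurjOn (vTri m) (DText m) (MText m) := by
    rintro ⟨i, j, k⟩ hv
    simp only [MText, Mfull, nonnegV, Set.mem_setOf_eq, tauW, wtM, tM] at hv
    refine ⟨(i + 2 * j + 3 * k - 3 * m, j / 2,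
      (i + 2 * j + 3 * k - 3 * m) - 2 * (j / 2) - 2 * k + 2 - j % 2), ?_, ?_⟩
    · simp only [DText, Dall, nonnegV, Set.mem_setOf_eq, tD, tauW]
      refine ⟨⟨⟨?_, ?_, ?_⟩, ?_⟩, ?_⟩ <;> omega
    · simp only [vTri, epsZ, Prod.mk.injEq]
      refine ⟨?_, ?_, ?_⟩ <;> omega
  refine ⟨⟨hu_maps, hu_inj, hu_surj⟩, ⟨hv_maps, hv_inj, hv_surj⟩, ?_⟩
  rintro ⟨w, r, s⟩ hd
  simp only [DText, Dall, nonnegV, Set.mem_setOf_eq, tD, tauW] at hd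
  simp only [vTri, uTri, epsZ, etaZ, nonnegV, wtM, wtR, tM, tR, Prod.snd_sub,
    Prod.fst_sub, Prod.mk_sub_mk]
  refine ⟨⟨?_, ?_, ?_⟩, ?_, ?_⟩ <;> omega
end

section
/- Fix an integer m ≥ 2. The bijection φ^△ : 𝓡^T → 𝓜^T maps 𝓡^△ onto 𝓜^△. More precisely, for each integer w ≡ 2 mod 3 let u_w = (6m−8−w, 0, (2w−6m+8)/3) and v_w = (6m−8−w, 0, (2w−3m+8)/3); then 𝓡^T ∖ 𝓡^△ = {u_w : 3m−4 ≤ w ≤ 6m−10, w ≡ 2 mod 3}, 𝓜^T ∖ 𝓜^△ = {v_w : 3m−4 ≤ w ≤ 6m−10, w ≡ 2 mod 3}, and φ^△(u_w) = v_w = u_w + (0,0,m) for every such w. -/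
open Finset

def uwPt (m w : ℤ) : V := (6 * m - 8 - w, 0, (2 * w - 6 * m + 8) / 3)

def vwPt (m w : ℤ) : V := (6 * m - 8 - w, 0, (2 * w - 3 * m + 8) / 3)

/-- inverse of `uTri` -/
def psiR (u : V) : V := (wtR u, u.2.1, u.1 / 3)

/-- inverse of `vTri` -/
def psiM (m : ℤ) (v : V) : V :=
  (wtM m v, v.2.1 / 2, v.1 + v.2.1 + v.2.2 - 3 * m + 2)

lemma uTri_psiR (u : V) : uTri (psiR u) = u := by
  obtain ⟨a, b, c⟩ := u
  simp only [uTri, psiR, wtR, etaZ, Prod.mk.injEq]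
  refine ⟨by omega, trivial, by omega⟩

lemma psiR_uTri (d : V) : psiR (uTri d) = d := by
  obtain ⟨w, r, s⟩ := d
  simp only [uTri, psiR, wtR, etaZ, Prod.mk.injEq]
  refine ⟨by omega, trivial, by omega⟩

lemma vTri_psiM (m : ℤ) (v : V) : vTri m (psiM m v) = v := by
  obtain ⟨i, j, k⟩ := v
  simp only [vTri, psiM, wtM, epsZ, Prod.mk.injEq]
  refine ⟨?_, ?_, ?_⟩ <;> omega

lemma psiM_vTri (m : ℤ) (d : V) : psiM m (vTri m d) = d := by
  obtain ⟨w, r, s⟩ := d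
  simp only [vTri, psiM, wtM, epsZ, Prod.mk.injEq]
  refine ⟨?_, ?_, ?_⟩ <;> omega

lemma mem_D_psiR (m : ℤ) (u : V) (hu : u ∈ RText m) : psiR u ∈ DText m := by
  obtain ⟨a, b, c⟩ := u
  simp only [RText, DText, Dall, psiR, nonnegV, tR, tD, tauW, wtR,
    Set.mem_setOf_eq] at hu ⊢
  omega

lemma mem_R_uTri (m : ℤ) (d : V) (hd : d ∈ DText m) : uTri d ∈ RText m := by
  obtain ⟨w, r, s⟩ := d
  simp only [RText, DText, Dall, uTri, nonnegV, tR, tD, tauW, wtR, etaZ,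
    Set.mem_setOf_eq] at hd ⊢
  omega

lemma mem_M_vTri (m : ℤ) (d : V) (hd : d ∈ DText m) : vTri m d ∈ MText m := by
  obtain ⟨w, r, s⟩ := d
  simp only [MText, Mfull, DText, Dall, vTri, nonnegV, tM, tD, tauW, wtM, epsZ,
    Set.mem_setOf_eq] at hd ⊢
  omega

lemma mem_D_psiM (m : ℤ) (v : V) (hv : v ∈ MText m) : psiM m v ∈ DText m := by
  obtain ⟨i, j, k⟩ := v
  simp only [MText, Mfull, DText, Dall, psiM, nonnegV, tM, tD, tauW, wtM,
    Set.mem_setOf_eq] at hv ⊢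
  omega

lemma Rtri_char (m : ℤ) (u : V) :
    u ∈ Rtri m ↔ u ∈ RText m ∧ 2 * u.1 + 2 * u.2.1 + 3 * u.2.2 ≤ 6 * m - 9 := by
  simp only [Rtri, Rprime, RText, nonnegV, Set.mem_setOf_eq]
  tauto

lemma Mtri_char (m : ℤ) (v : V) :
    v ∈ Mtri m ↔ v ∈ MText m ∧ 2 * v.1 + 2 * v.2.1 + 3 * v.2.2 ≤ 9 * (m - 1) := by
  simp only [Mtri, Mprime, MText, Mfull, nonnegV, Set.mem_setOf_eq]
  tauto

set_option maxHeartbeats 1000000 in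
lemma key_iff (m : ℤ) (d : V) (hd : d ∈ DText m) :
    uTri d ∈ Rtri m ↔ vTri m d ∈ Mtri m := by
  rw [Rtri_char, Mtri_char]
  have h1 := mem_R_uTri m d hd
  have h2 := mem_M_vTri m d hd
  simp only [h1, h2, true_and]
  obtain ⟨w, r, s⟩ := d
  simp only [DText, Dall, nonnegV, tD, tauW, Set.mem_setOf_eq] at hd
  obtain ⟨⟨⟨hw0, hr0, hs0⟩, hle⟩, htle⟩ := hd
  simp only [uTri, vTri, etaZ, epsZ]
  obtain ⟨q, e0, hqe, he01, he02⟩ : ∃ q e0, w = 3 * q + e0 ∧ 0 ≤ e0 ∧ e0 < 3 :=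
    ⟨w / 3, w % 3, by omega, by omega, by omega⟩
  obtain ⟨t, rho, hte, hrho1, hrho2⟩ :
      ∃ t rho, w - 2 * r - 3 * s = 6 * t + rho ∧ 0 ≤ rho ∧ rho < 6 :=
    ⟨(w - 2 * r - 3 * s) / 6, (w - 2 * r - 3 * s) % 6, by omega, by omega, by omega⟩
  obtain ⟨a, e, hae, he1, he2⟩ : ∃ a e, w + r = 3 * a + e ∧ 0 ≤ e ∧ e < 3 :=
    ⟨(w + r) / 3, (w + r) % 3, by omega, by omega, by omega⟩
  obtain ⟨b, ee, hbe, hee1, hee2⟩ : ∃ b ee, w + s = 2 * b + ee ∧ 0 ≤ ee ∧ ee < 2 :=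
    ⟨(w + s) / 2, (w + s) % 2, by omega, by omega, by omega⟩
  have hmod3 : (w + r) % 3 = e := by omega
  have hmod2 : (w + s) % 2 = ee := by omega
  have hq3 : w / 3 = q := by omega
  have ht6 : (w - 2 * r - 3 * s) / 6 = t := by omega
  rw [hmod3, hmod2]
  rw [hq3, ht6] at htle
  obtain ⟨c, hc⟩ : ∃ c, w - 2 * r - 3 * s - e = 3 * c :=
    ⟨(w - 2 * r - 3 * s - e) / 3, by omega⟩
  obtain ⟨i, hi⟩ : ∃ i, 6 * (m - 1) - w - 2 * r + 3 * s - ee = 2 * i :=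
    ⟨(6 * (m - 1) - w - 2 * r + 3 * s - ee) / 2, by omega⟩
  obtain ⟨k, hk⟩ : ∃ k, w - 2 * r - s + 2 - ee = 2 * k :=
    ⟨(w - 2 * r - s + 2 - ee) / 2, by omega⟩
  rw [hc, hi, hk, Int.mul_ediv_cancel_left _ (by norm_num : (3:ℤ) ≠ 0),
    Int.mul_ediv_cancel_left _ (by norm_num : (2:ℤ) ≠ 0),
    Int.mul_ediv_cancel_left _ (by norm_num : (2:ℤ) ≠ 0)]
  clear h1 h2 hmod3 hmod2 hq3 ht6
  have h3 : e0 = 0 ∨ e0 = 1 ∨ e0 = 2 := by omega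
  have h4 : e = 0 ∨ e = 1 ∨ e = 2 := by omega
  have h5 : ee = 0 ∨ ee = 1 := by omega
  rcases h3 with h3 | h3 | h3 <;> rcases h4 with h4 | h4 | h4 <;>
    rcases h5 with h5 | h5 <;> subst h3 h4 h5 <;> omega

lemma phiTri_eq (m : ℤ) (u : V) : phiTri m u = vTri m (psiR u) := rfl

lemma Rcompl (m : ℤ) (hm : 2 ≤ m) :
    RText m \ Rtri m =
      {u | ∃ w : ℤ, 3 * m - 4 ≤ w ∧ w ≤ 6 * m - 10 ∧ w % 3 = 2 ∧ u = uwPt m w} := by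
  ext ⟨a, b, c⟩
  simp only [Set.mem_diff, RText, Rtri, Rprime, nonnegV, tR, tauW, wtR, uwPt,
    Set.mem_setOf_eq, Prod.mk.injEq]
  constructor
  · rintro ⟨h1, h2⟩
    exact ⟨a + 2 * b + 3 * c, by omega, by omega, by omega, by omega, by omega, by omega⟩
  · rintro ⟨w, h1, h2, h3, rfl, rfl, rfl⟩
    omega

lemma Mcompl (m : ℤ) (hm : 2 ≤ m) :
    MText m \ Mtri m =
      {v | ∃ w : ℤ, 3 * m - 4 ≤ w ∧ w ≤ 6 * m - 10 ∧ w % 3 = 2 ∧ v = vwPt m w} := by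
  ext ⟨i, j, k⟩
  simp only [Set.mem_diff, MText, Mfull, Mtri, Mprime, nonnegV, tM, tauW, wtM, vwPt,
    Set.mem_setOf_eq, Prod.mk.injEq]
  constructor
  · rintro ⟨h1, h2⟩
    exact ⟨i + 2 * j + 3 * k - 3 * m, by omega, by omega, by omega, by omega, by omega,
      by omega⟩
  · rintro ⟨w, h1, h2, h3, rfl, rfl, rfl⟩
    omega

/-- **Corollary `phitriangles`.** `φ^△` maps `𝓡^△` onto `𝓜^△`, and the
complements `𝓡^T ∖ 𝓡^△`, `𝓜^T ∖ 𝓜^△` consist exactly of the monomials `u_w`, `v_w`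
for `3m-4 ≤ w ≤ 6m-10`, `w ≡ 2 (mod 3)`, with `φ^△(u_w) = v_w = u_w + (0,0,m)`. -/
theorem phiTri_triangles (m : ℤ) (hm : 2 ≤ m) :
    (∀ d ∈ DText m, phiTri m (uTri d) = vTri m d) ∧
    Set.BijOn (phiTri m) (RText m) (MText m) ∧
    Set.BijOn (phiTri m) (Rtri m) (Mtri m) ∧
    RText m \ Rtri m =
      {u | ∃ w : ℤ, 3 * m - 4 ≤ w ∧ w ≤ 6 * m - 10 ∧ w % 3 = 2 ∧ u = uwPt m w} ∧
    MText m \ Mtri m =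
      {v | ∃ w : ℤ, 3 * m - 4 ≤ w ∧ w ≤ 6 * m - 10 ∧ w % 3 = 2 ∧ v = vwPt m w} ∧
    ∀ w : ℤ, 3 * m - 4 ≤ w → w ≤ 6 * m - 10 → w % 3 = 2 →
      phiTri m (uwPt m w) = vwPt m w ∧ vwPt m w = uwPt m w + ((0 : ℤ), (0 : ℤ), m) := by
  have hinv : Set.InvOn (fun v => uTri (psiM m v)) (phiTri m) (RText m) (MText m) := by
    constructor
    · intro u _
      show uTri (psiM m (phiTri m u)) = u
      rw [phiTri_eq, psiM_vTri, uTri_psiR]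
    · intro v _
      rw [phiTri_eq, psiR_uTri, vTri_psiM]
  have hmapsR : Set.MapsTo (phiTri m) (RText m) (MText m) := fun u hu => by
    rw [phiTri_eq]; exact mem_M_vTri m _ (mem_D_psiR m _ hu)
  have hmapsM : Set.MapsTo (fun v => uTri (psiM m v)) (MText m) (RText m) :=
    fun v hv => mem_R_uTri m _ (mem_D_psiM m _ hv)
  have hbij : Set.BijOn (phiTri m) (RText m) (MText m) := hinv.bijOn hmapsR hmapsM
  have hRsub : Rtri m ⊆ RText m := by
    intro u hu
    obtain ⟨⟨hn, _⟩, h2⟩ := hu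
    exact ⟨hn, h2⟩
  have hMsub : Mtri m ⊆ MText m := by
    intro v hv
    obtain ⟨⟨hn, _, h3, h4⟩, h2⟩ := hv
    exact ⟨⟨hn, h3, h4⟩, h2⟩
  have hbij2 : Set.BijOn (phiTri m) (Rtri m) (Mtri m) := by
    refine Set.InvOn.bijOn (hinv.mono hRsub hMsub) ?_ ?_
    · intro u hu
      have hd := mem_D_psiR m u (hRsub hu)
      have := (key_iff m (psiR u) hd).mp (by rwa [uTri_psiR])
      rwa [phiTri_eq]
    · intro v hv
      have hd := mem_D_psiM m v (hMsub hv)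
      have := (key_iff m (psiM m v) hd).mpr (by rwa [vTri_psiM])
      exact this
  refine ⟨?_, hbij, hbij2, Rcompl m hm, Mcompl m hm, ?_⟩
  · intro d _
    rw [phiTri_eq, psiR_uTri]
  · intro w h1 h2 h3
    constructor
    · show vTri m (psiR (uwPt m w)) = vwPt m w
      simp only [psiR, vTri, wtR, uwPt, vwPt, epsZ, Prod.mk.injEq]
      refine ⟨?_, ?_, ?_⟩ <;> omega
    · show vwPt m w = (_, _, _)
      simp only [uwPt, vwPt, Prod.mk.injEq, Prod.mk_add_mk]
      refine ⟨?_, ?_, ?_⟩ <;> omega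
end
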